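/- arXiv:1811.02251 — 6 statements merged into one kernel-verified Lean document; each statement's English description precedes it below -/
import Mathlib

section
/- Let G^C_{k_d} denote the generating function (in variables q, a, c, d) for coloured partitions in the Capparelli class 𝒞 (colours a,c,d, order 1_a<1_c<1_d<2_a<⋯, difference matrix C with rows a:(2,2,2), c:(1,1,2), d:(0,1,2)) whose largest part is at most k_d. Then for all k ≥ 1: G^C_{k_d} = (1 + c q^k) G^C_{(k-1)_d} + (a q^k + d q^k + a d q^{2k}) G^C_{(k-2)_d} + a d q^{2k-1} (1 - c q^{k-1}) G^C_{(k-3)_d}, with initial conditions G^C_{0_d} = 1, G^C_{-1_d} = 1, G^C_{-2_d} = 0. -/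
noncomputable section

/-- The q-Pochhammer symbol `(x;q)_n = ∏_{i=0}^{n-1} (1 - x q^i)`. -/
def qPoch (x q : ℂ) (n : ℕ) : ℂ := ∏ i ∈ Finset.range n, (1 - x * q ^ i)


/-- The Capparelli difference matrix, colours `0 = a`, `1 = c`, `2 = d`. -/
def capMat : Fin 3 → Fin 3 → ℕ := ![![2,2,2],![1,1,2],![0,1,2]]

/-- A coloured partition (written with largest part first) in the Capparelli class `𝒞`:
parts are positive, and a part of colour `x` followed by a part of colour `y` must exceed
it by at least `capMat x y`.  (These gap conditions encode the order
`1_a < 1_c < 1_d < 2_a < ⋯`.) -/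
def CapValid (l : List (ℕ × Fin 3)) : Prop :=
  (∀ p ∈ l, 1 ≤ p.1) ∧ l.Chain' (fun p r => r.1 + capMat p.2 r.2 ≤ p.1)

/-- The weight of a coloured partition. -/
def wt3 (l : List (ℕ × Fin 3)) : ℕ := (l.map Prod.fst).sum

/-- The number of parts of colour `i`. -/
def nc3 (l : List (ℕ × Fin 3)) (i : Fin 3) : ℕ := (l.map Prod.snd).count i

namespace CapAux

lemma cap_pair : ∀ x y z : Fin 3, 1 ≤ capMat x y + capMat y z := by decide

lemma cap0 (x : Fin 3) : capMat 0 x = 2 := by fin_cases x <;> rfl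

lemma capValid_cons {p : ℕ × Fin 3} {m : List (ℕ × Fin 3)} :
    CapValid (p :: m) ↔
      1 ≤ p.1 ∧ CapValid m ∧ ∀ r ∈ m.head?, r.1 + capMat p.2 r.2 ≤ p.1 := by
  unfold CapValid
  rw [List.forall_mem_cons, List.Chain', List.Chain', List.isChain_cons]
  tauto

lemma parts_le_head : ∀ {m : List (ℕ × Fin 3)} {p : ℕ × Fin 3},
    (p :: m).Chain' (fun x y => y.1 + capMat x.2 y.2 ≤ x.1) → ∀ r ∈ m, r.1 ≤ p.1 := by
  intro m
  induction m with
  | nil => intro p _ r hr; simp at hr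
  | cons x xs ih =>
    intro p h r hr
    rw [List.Chain', List.isChain_cons_cons] at h
    have hx : x.1 ≤ p.1 := le_trans (Nat.le_add_right _ _) h.1
    rcases List.mem_cons.mp hr with rfl | hr
    · exact hx
    · exact (ih h.2 r hr).trans hx

lemma parts_le_of_head_le {m : List (ℕ × Fin 3)}
    (hm : m.Chain' (fun x y => y.1 + capMat x.2 y.2 ≤ x.1)) {b : ℕ}
    (hb : ∀ s ∈ m.head?, s.1 ≤ b) : ∀ r ∈ m, r.1 ≤ b := by
  cases m with
  | nil => simp
  | cons s u =>
    intro r hr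
    have hs : s.1 ≤ b := hb s rfl
    rcases List.mem_cons.mp hr with rfl | hr
    · exact hs
    · exact (parts_le_head hm r hr).trans hs

lemma length_le : ∀ (k : ℕ) (l : List (ℕ × Fin 3)), CapValid l → (∀ p ∈ l, p.1 ≤ k) →
    l.length ≤ 2 * k := by
  intro k
  induction k using Nat.strong_induction_on with
  | _ k ih =>
    intro l hl hb
    match l with
    | [] => simp
    | [p] =>
      have h1 := hl.1 p (by simp)
      have h2 := hb p (by simp)
      simp only [List.length_cons, List.length_nil]
      omega
    | p :: r :: tt =>
      have h1 : r.1 + capMat p.2 r.2 ≤ p.1 := (List.isChain_cons_cons.mp hl.2).1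
      have hch : (r :: tt).Chain' (fun x y => y.1 + capMat x.2 y.2 ≤ x.1) :=
        (List.isChain_cons_cons.mp hl.2).2
      have hk1 : 1 ≤ k := le_trans (hl.1 p (by simp)) (hb p (by simp))
      have htt : CapValid tt :=
        ⟨fun s hs => hl.1 s (by simp [hs]), ((List.isChain_cons.mp hch).2)⟩
      have hbt : ∀ s ∈ tt, s.1 ≤ k - 1 := by
        apply parts_le_of_head_le htt.2
        intro s hs
        cases tt with
        | nil => simp at hs
        | cons s0 u =>
          have hs0 : s0 = s := by simpa using hs
          have h2 : s.1 + capMat r.2 s.2 ≤ r.1 := hs0 ▸ (List.isChain_cons_cons.mp hch).1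
          have h3 := cap_pair p.2 r.2 s.2
          have hpk := hb p (by simp)
          omega
      have := ih (k-1) (by omega) tt htt hbt
      simp only [List.length_cons]
      omega

def SS (k : ℕ) : Set (List (ℕ × Fin 3)) := {l | CapValid l ∧ ∀ p ∈ l, p.1 ≤ k}

def TT (k : ℕ) : Set (List (ℕ × Fin 3)) := {l | l ∈ SS k ∧ l.head? = some (k, (2 : Fin 3))}

lemma TT_subset (k : ℕ) : TT k ⊆ SS k := fun _ hl => hl.1

lemma SS_finite (k : ℕ) : (SS k).Finite := by
  have hsub : SS k ⊆ (fun m : List (Fin (k+1) × Fin 3) => m.map fun p => ((p.1 : ℕ), p.2)) ''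
      {m | m.length ≤ 2*k} := by
    intro l hl
    refine ⟨l.map (fun p => (⟨min p.1 k, by omega⟩, p.2)), ?_, ?_⟩
    · simpa using length_le k l hl.1 hl.2
    · show List.map _ (List.map _ l) = l
      rw [List.map_map]
      conv_rhs => rw [← List.map_id l]
      refine List.map_congr_left (fun p hp => ?_)
      have := hl.2 p hp
      simp [Function.comp, Nat.min_eq_left this]
  exact ((List.finite_length_le _ _).image _).subset hsub

lemma TT_finite (k : ℕ) : (TT k).Finite := (SS_finite k).subset (TT_subset k)

lemma SS_zero : SS 0 = {[]} := by
  ext l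
  constructor
  · rintro ⟨⟨h1, _⟩, h2⟩
    cases l with
    | nil => rfl
    | cons p m =>
      have := h1 p (by simp)
      have := h2 p (by simp)
      omega
  · rintro rfl
    exact ⟨⟨by simp, List.isChain_nil⟩, by simp⟩

lemma TT_zero : TT 0 = ∅ := by
  ext l
  simp only [TT, Set.mem_setOf_eq, Set.mem_empty_iff_false, iff_false, not_and]
  rintro ⟨⟨h1, _⟩, _⟩ hh
  cases l with
  | nil => simp at hh
  | cons p m =>
    have hp : p = (0, (2 : Fin 3)) := by simpa using hh
    subst hp
    simpa using h1 _ List.mem_cons_self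


lemma cap1ge : ∀ x : Fin 3, 1 ≤ capMat 1 x := by decide

lemma cap1ne : ∀ x : Fin 3, x ≠ 2 → capMat 1 x = 1 := by decide

lemma cap12 : capMat 1 2 = 2 := by decide

lemma cap20 : capMat 2 0 = 0 := by decide

lemma cap21 : capMat 2 1 = 1 := by decide

lemma cap22 : capMat 2 2 = 2 := by decide

lemma cap2pos : ∀ x : Fin 3, x ≠ 0 → 1 ≤ capMat 2 x := by decide

lemma cap2le1 : ∀ x : Fin 3, x ≠ 2 → capMat 2 x ≤ 1 := by decide

lemma head_mem_TT {n : ℕ} {m : List (ℕ × Fin 3)} (hm : m ∈ SS n)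
    (hh : m.head? = some (n, (2 : Fin 3))) : m ∈ TT n := ⟨hm, hh⟩

lemma mem_SS_cons {k v : ℕ} {j : Fin 3} {m : List (ℕ × Fin 3)} :
    ((v, j) :: m) ∈ SS k ↔
      (1 ≤ v ∧ v ≤ k) ∧ CapValid m ∧ (∀ r ∈ m.head?, r.1 + capMat j r.2 ≤ v) ∧
        ∀ p ∈ m, p.1 ≤ k := by
  simp only [SS, Set.mem_setOf_eq, capValid_cons, List.forall_mem_cons]
  tauto

lemma memA {n : ℕ} {m : List (ℕ × Fin 3)} :
    ((n + 1, (0 : Fin 3)) :: m) ∈ SS (n + 1) ↔ m ∈ SS (n - 1) := by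
  rw [mem_SS_cons]
  constructor
  · rintro ⟨-, hv, hh, -⟩
    refine ⟨hv, parts_le_of_head_le hv.2 (fun s hs => ?_)⟩
    have h1 := hh s hs
    rw [cap0] at h1
    have h2 := hv.1 s (List.mem_of_mem_head? hs)
    omega
  · rintro ⟨hv, hb⟩
    refine ⟨⟨by omega, le_rfl⟩, hv, fun r hr => ?_, fun p hp => by have := hb p hp; omega⟩
    have h1 := hb r (List.mem_of_mem_head? hr)
    have h2 := hv.1 r (List.mem_of_mem_head? hr)
    rw [cap0]
    omega

lemma memC {n : ℕ} {m : List (ℕ × Fin 3)} :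
    ((n + 1, (1 : Fin 3)) :: m) ∈ SS (n + 1) ↔ m ∈ SS n \ TT n := by
  rw [mem_SS_cons]
  constructor
  · rintro ⟨-, hv, hh, -⟩
    have hle : ∀ p ∈ m, p.1 ≤ n := by
      refine parts_le_of_head_le hv.2 (fun s hs => ?_)
      have h1 := hh s hs
      have h2 := cap1ge s.2
      omega
    refine ⟨⟨hv, hle⟩, fun hT => ?_⟩
    cases m with
    | nil => simpa [TT] using hT
    | cons s u =>
      have hs : s = (n, (2 : Fin 3)) := by simpa [TT] using hT.2
      have h1 := hh s rfl
      rw [hs] at h1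
      rw [cap12] at h1
      omega
  · rintro ⟨⟨hv, hb⟩, hT⟩
    refine ⟨⟨by omega, le_rfl⟩, hv, fun r hr => ?_, fun p hp => by have := hb p hp; omega⟩
    have h1 := hb r (List.mem_of_mem_head? hr)
    by_cases h2 : r.2 = 2
    · have hr1 : r.1 ≠ n := by
        intro hrn
        refine hT (head_mem_TT ⟨hv, hb⟩ ?_)
        cases m with
        | nil => simp at hr
        | cons s u =>
          have hs : s = r := by simpa using hr
          subst hs
          simp only [List.head?_cons, Option.some.injEq]
          exact Prod.ext hrn h2
      have h3 : capMat 1 r.2 = 2 := by rw [h2]; exact cap12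
      omega
    · have h3 : capMat 1 r.2 = 1 := cap1ne r.2 h2
      omega

lemma memD {n : ℕ} {m : List (ℕ × Fin 3)} :
    ((n + 1, (2 : Fin 3)) :: m) ∈ SS (n + 1) ↔
      m ∈ (SS n \ TT n) ∪ ((n + 1, (0 : Fin 3)) :: ·) '' SS (n - 1) := by
  rw [mem_SS_cons]
  constructor
  · rintro ⟨-, hv, hh, hB⟩
    cases m with
    | nil =>
      left
      refine ⟨⟨⟨by simp, List.isChain_nil⟩, by simp⟩, ?_⟩
      simp [TT]
    | cons s u =>
      obtain ⟨sv, sj⟩ := s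
      by_cases hs : sv = n + 1 ∧ sj = 0
      · right
        obtain ⟨rfl, rfl⟩ := hs
        exact ⟨u, memA.mp ⟨hv, hB⟩, rfl⟩
      · left
        have h1 := hh (sv, sj) rfl
        simp only at h1
        have hsvn : sv ≤ n := by
          by_cases hj : sj = 0
          · subst hj
            rw [cap20] at h1
            rcases Nat.lt_or_ge sv (n+1) with h | h
            · omega
            · exact absurd ⟨by omega, rfl⟩ hs
          · have := cap2pos sj hj
            omega
        have hmS : (sv, sj) :: u ∈ SS n := by
          refine ⟨hv, ?_⟩
          intro p hp
          rcases List.mem_cons.mp hp with rfl | hp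
          · exact hsvn
          · exact (parts_le_head hv.2 p hp).trans hsvn
        refine ⟨hmS, fun hT => ?_⟩
        have hhd : ((sv, sj) : ℕ × Fin 3) = (n, (2 : Fin 3)) := by simpa [TT] using hT.2
        have h2 : sv = n ∧ sj = 2 := by
          constructor
          · exact congrArg Prod.fst hhd
          · exact congrArg Prod.snd hhd
        rw [h2.2, cap22] at h1
        omega
  · rintro (⟨hmS, hT⟩ | ⟨u, hu, rfl⟩)
    · refine ⟨⟨by omega, le_rfl⟩, hmS.1, fun r hr => ?_,
        fun p hp => by have := hmS.2 p hp; omega⟩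
      have h1 := hmS.2 r (List.mem_of_mem_head? hr)
      obtain ⟨rv, rj⟩ := r
      simp only at h1 ⊢
      by_cases hj : rj = 2
      · subst hj
        rw [cap22]
        have hrn : rv ≠ n := by
          intro hrn
          refine hT (head_mem_TT hmS ?_)
          cases m with
          | nil => simp at hr
          | cons s w =>
            have hs : (rv, (2 : Fin 3)) = s := by
              have := hr
              simp only [List.head?_cons, Option.mem_def, Option.some.injEq] at this
              exact this.symm
            simp [← hs, hrn]
        omega
      · have := cap2le1 rj hj
        omega
    · have huS := memA.mpr hu
      rcases mem_SS_cons.mp huS with ⟨hvu, hcu, hhu, hbu⟩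
      refine ⟨⟨by omega, le_rfl⟩, huS.1, fun r hr => ?_, fun p hp => huS.2 p hp⟩
      have hs : ((n + 1 : ℕ), (0 : Fin 3)) = r := by simpa using hr
      rw [← hs, cap20]

lemma SS_succ (n : ℕ) :
    SS (n + 1) =
      (SS n ∪ ((n + 1, (0 : Fin 3)) :: ·) '' SS (n - 1)) ∪
        (((n + 1, (1 : Fin 3)) :: ·) '' (SS n \ TT n) ∪ TT (n + 1)) := by
  ext l
  constructor
  · intro hl
    by_cases hall : ∀ p ∈ l, p.1 ≤ n
    · exact Or.inl (Or.inl ⟨hl.1, hall⟩)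
    · push_neg at hall
      obtain ⟨p, hp, hpn⟩ := hall
      cases l with
      | nil => simp at hp
      | cons p0 m =>
        have hple : p.1 ≤ p0.1 := by
          rcases List.mem_cons.mp hp with rfl | hp
          · exact le_rfl
          · exact parts_le_head hl.1.2 p hp
        have hp0 : p0.1 = n + 1 := by
          have h1 := hl.2 p0 (by simp)
          have h2 := hl.2 p hp
          omega
        obtain ⟨v, j⟩ := p0
        simp only at hp0
        subst hp0
        fin_cases j
        · exact Or.inl (Or.inr ⟨m, memA.mp hl, rfl⟩)
        · exact Or.inr (Or.inl ⟨m, memC.mp hl, rfl⟩)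
        · exact Or.inr (Or.inr ⟨hl, rfl⟩)
  · rintro ((h | ⟨m, hm, rfl⟩) | (⟨m, hm, rfl⟩ | h))
    · exact ⟨h.1, fun p hp => (h.2 p hp).trans (by omega)⟩
    · exact memA.mpr hm
    · exact memC.mpr hm
    · exact h.1

lemma TT_succ (n : ℕ) :
    TT (n + 1) =
      ((n + 1, (2 : Fin 3)) :: ·) ''
        ((SS n \ TT n) ∪ ((n + 1, (0 : Fin 3)) :: ·) '' SS (n - 1)) := by
  ext l
  constructor
  · rintro ⟨hS, hh⟩
    cases l with
    | nil => simp at hh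
    | cons p0 m =>
      have hp0 : p0 = ((n + 1 : ℕ), (2 : Fin 3)) := by simpa using hh
      subst hp0
      exact ⟨m, memD.mp hS, rfl⟩
  · rintro ⟨m, hm, rfl⟩
    exact ⟨memD.mpr hm, rfl⟩


def Wt (q a c d : ℂ) (l : List (ℕ × Fin 3)) : ℂ :=
  q ^ wt3 l * a ^ nc3 l 0 * c ^ nc3 l 1 * d ^ nc3 l 2

variable (q a c d : ℂ)

lemma Wt_nil : Wt q a c d [] = 1 := by simp [Wt, wt3, nc3]

lemma Wt_cons0 (v : ℕ) (m : List (ℕ × Fin 3)) :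
    Wt q a c d ((v, (0 : Fin 3)) :: m) = (a * q ^ v) * Wt q a c d m := by
  simp only [Wt, wt3, nc3, List.map_cons, List.sum_cons, List.count_cons, pow_add]
  norm_num
  rw [if_neg (by decide)]
  ring

lemma Wt_cons1 (v : ℕ) (m : List (ℕ × Fin 3)) :
    Wt q a c d ((v, (1 : Fin 3)) :: m) = (c * q ^ v) * Wt q a c d m := by
  simp only [Wt, wt3, nc3, List.map_cons, List.sum_cons, List.count_cons, pow_add]
  norm_num
  rw [if_neg (by decide)]
  ring

lemma Wt_cons2 (v : ℕ) (m : List (ℕ × Fin 3)) :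
    Wt q a c d ((v, (2 : Fin 3)) :: m) = (d * q ^ v) * Wt q a c d m := by
  simp only [Wt, wt3, nc3, List.map_cons, List.sum_cons, List.count_cons, pow_add]
  norm_num
  rw [if_neg (by decide), if_neg (by decide)]
  ring

lemma summable_Wt {s : Set (List (ℕ × Fin 3))} (hs : s.Finite) :
    Summable ((Wt q a c d) ∘ ((↑) : s → List (ℕ × Fin 3))) := by
  have := hs.to_subtype
  exact Summable.of_finite

def gg (k : ℕ) : ℂ := ∑' l : SS k, Wt q a c d l

def tt (k : ℕ) : ℂ := ∑' l : TT k, Wt q a c d l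

lemma gg_zero : gg q a c d 0 = 1 := by
  rw [gg, tsum_congr_set_coe _ SS_zero, tsum_singleton]
  exact Wt_nil q a c d

lemma tt_zero : tt q a c d 0 = 0 := by
  rw [tt, tsum_congr_set_coe _ TT_zero]
  exact tsum_empty

lemma tsum_diff (n : ℕ) :
    ∑' l : ↑(SS n \ TT n), Wt q a c d l = gg q a c d n - tt q a c d n := by
  have h : SS n = (SS n \ TT n) ∪ TT n := (Set.diff_union_of_subset (TT_subset n)).symm
  have h2 : gg q a c d n = (∑' l : ↑(SS n \ TT n), Wt q a c d l) + tt q a c d n := by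
    rw [gg, tsum_congr_set_coe _ h]
    exact Summable.tsum_union_disjoint Set.disjoint_sdiff_left
      (summable_Wt q a c d ((SS_finite n).subset Set.diff_subset))
      (summable_Wt q a c d (TT_finite n))
  rw [h2]; ring

lemma tsum_image_cons (p : ℕ × Fin 3) (s : Set (List (ℕ × Fin 3))) :
    ∑' l : ↑((p :: ·) '' s), Wt q a c d l = ∑' m : s, Wt q a c d (p :: m) :=
  tsum_image _ (List.cons_injective.injOn)

lemma gg_succ (n : ℕ) :
    gg q a c d (n + 1) = gg q a c d n + (a * q ^ (n+1)) * gg q a c d (n - 1)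
      + (c * q ^ (n+1)) * (gg q a c d n - tt q a c d n) + tt q a c d (n + 1) := by
  have fin0 : ((SS n ∪ ((n + 1, (0 : Fin 3)) :: ·) '' SS (n - 1))).Finite :=
    (SS_finite n).union ((SS_finite (n-1)).image _)
  have fin1 : ((((n + 1, (1 : Fin 3)) :: ·) '' (SS n \ TT n)) ∪ TT (n + 1)).Finite :=
    (((SS_finite n).subset Set.diff_subset).image _).union (TT_finite (n+1))
  have d01 : Disjoint (SS n) (((n + 1, (0 : Fin 3)) :: ·) '' SS (n - 1)) := by
    rw [Set.disjoint_left]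
    rintro l hS ⟨m, -, rfl⟩
    have := hS.2 _ List.mem_cons_self
    simp at this
  have dXY : Disjoint (SS n ∪ ((n + 1, (0 : Fin 3)) :: ·) '' SS (n - 1))
      ((((n + 1, (1 : Fin 3)) :: ·) '' (SS n \ TT n)) ∪ TT (n + 1)) := by
    rw [Set.disjoint_left]
    rintro l (hS | ⟨m, -, rfl⟩) (⟨m2, -, heq⟩ | hT)
    · subst heq
      have := hS.2 _ List.mem_cons_self
      simp at this
    · rcases hT with ⟨-, hh⟩
      cases l with
      | nil => simp at hh
      | cons p0 w =>
        have hp : p0 = ((n+1 : ℕ), (2 : Fin 3)) := by simpa using hh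
        have := hS.2 p0 List.mem_cons_self
        rw [hp] at this
        simp at this
    · have := congrArg Prod.snd (List.head_eq_of_cons_eq heq)
      simp at this
    · rcases hT with ⟨-, hh⟩
      have : ((n+1 : ℕ), (0 : Fin 3)) = ((n+1 : ℕ), (2 : Fin 3)) := by simpa using hh
      have := congrArg Prod.snd this
      simp at this
  have d23 : Disjoint ((((n + 1, (1 : Fin 3)) :: ·) '' (SS n \ TT n))) (TT (n + 1)) := by
    rw [Set.disjoint_left]
    rintro l ⟨m, -, rfl⟩ ⟨-, hh⟩
    have : ((n+1 : ℕ), (1 : Fin 3)) = ((n+1 : ℕ), (2 : Fin 3)) := by simpa using hh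
    have := congrArg Prod.snd this
    simp at this
  rw [gg, tsum_congr_set_coe _ (SS_succ n),
    Summable.tsum_union_disjoint dXY (summable_Wt q a c d fin0) (summable_Wt q a c d fin1),
    Summable.tsum_union_disjoint d01 (summable_Wt q a c d (SS_finite n))
      (summable_Wt q a c d ((SS_finite (n-1)).image _)),
    Summable.tsum_union_disjoint d23 (summable_Wt q a c d (((SS_finite n).subset Set.diff_subset).image _))
      (summable_Wt q a c d (TT_finite (n+1))),
    tsum_image_cons, tsum_image_cons]
  simp_rw [Wt_cons0, Wt_cons1]
  rw [tsum_mul_left, tsum_mul_left, tsum_diff]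
  rw [← gg, ← gg, ← tt]
  ring

lemma tt_succ (n : ℕ) :
    tt q a c d (n + 1) = (d * q ^ (n+1)) *
      ((gg q a c d n - tt q a c d n) + (a * q ^ (n+1)) * gg q a c d (n - 1)) := by
  have dW : Disjoint (SS n \ TT n) (((n + 1, (0 : Fin 3)) :: ·) '' SS (n - 1)) := by
    rw [Set.disjoint_left]
    rintro l hS ⟨m, -, rfl⟩
    have := hS.1.2 _ List.mem_cons_self
    simp at this
  rw [tt, tsum_congr_set_coe _ (TT_succ n), tsum_image_cons]
  simp_rw [Wt_cons2]
  rw [tsum_mul_left]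
  congr 1
  rw [Summable.tsum_union_disjoint dW (summable_Wt q a c d ((SS_finite n).subset Set.diff_subset))
      (summable_Wt q a c d ((SS_finite (n-1)).image _)),
    tsum_diff, tsum_image_cons]
  simp_rw [Wt_cons0]
  rw [tsum_mul_left, ← gg]

end CapAux

/-- The recurrence for the Capparelli generating function `G^C_{k_d}`
(generating function for coloured partitions in the Capparelli class with largest part
at most `k`, tracking the weight by `q` and the numbers of parts coloured `a,c,d`):
for all `k ≥ 1`,
`G_k = (1+cq^k) G_{k-1} + (aq^k+dq^k+adq^{2k}) G_{k-2} + adq^{2k-1}(1-cq^{k-1}) G_{k-3}`,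
with initial conditions `G_0 = 1`, `G_{-1} = 1`, `G_{-2} = 0`. -/
theorem capparelli_recurrence (q a c d : ℂ) (G : ℤ → ℂ)
    (hG : ∀ k : ℕ, G k =
      ∑' l : {l : List (ℕ × Fin 3) // CapValid l ∧ ∀ p ∈ l, p.1 ≤ k},
        q ^ wt3 l.1 * a ^ nc3 l.1 0 * c ^ nc3 l.1 1 * d ^ nc3 l.1 2)
    (hGm1 : G (-1) = 1) (hGm2 : G (-2) = 0) :
    G 0 = 1 ∧ ∀ k : ℤ, 1 ≤ k →
      G k = (1 + c * q ^ k) * G (k - 1)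
        + (a * q ^ k + d * q ^ k + a * d * q ^ (2 * k)) * G (k - 2)
        + a * d * q ^ (2 * k - 1) * (1 - c * q ^ (k - 1)) * G (k - 3) := by
  have hg : ∀ k : ℕ, G k = CapAux.gg q a c d k := fun k => hG k
  refine ⟨?_, ?_⟩
  · have h0 := hg 0
    rw [CapAux.gg_zero] at h0
    simpa using h0
  · intro k hk
    obtain ⟨m, rfl⟩ : ∃ m : ℕ, k = (m : ℤ) + 1 := ⟨(k - 1).toNat, by omega⟩
    cases m with
    | zero =>
      simp only [Nat.cast_zero, zero_add]
      rw [show (2:ℤ) * 1 - 1 = ((1:ℕ):ℤ) by norm_num,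
        show (2:ℤ) * 1 = ((2:ℕ):ℤ) by norm_num,
        show (1:ℤ) - 2 = (-1 : ℤ) by norm_num,
        show (1:ℤ) - 3 = (-2 : ℤ) by norm_num, hGm1, hGm2,
        show (1:ℤ) - 1 = ((0:ℕ):ℤ) by norm_num,
        show (1:ℤ) = ((1:ℕ):ℤ) by norm_num]
      rw [zpow_natCast, zpow_natCast, zpow_natCast]
      rw [hg 1, hg 0]
      have E1 := CapAux.gg_succ q a c d 0
      have E2 := CapAux.tt_succ q a c d 0
      norm_num at E1 E2
      rw [CapAux.gg_zero, CapAux.tt_zero] at E1 E2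
      rw [CapAux.gg_zero]
      linear_combination E1 + E2
    | succ j =>
      rw [show (2:ℤ) * (((j+1:ℕ):ℤ) + 1) - 1 = ((2*j+3:ℕ):ℤ) by push_cast; ring,
        show (2:ℤ) * (((j+1:ℕ):ℤ) + 1) = ((2*j+4:ℕ):ℤ) by push_cast; ring,
        show ((j+1:ℕ):ℤ) + 1 - 1 = ((j+1:ℕ):ℤ) by push_cast; ring,
        show ((j+1:ℕ):ℤ) + 1 - 2 = ((j:ℕ):ℤ) by push_cast; ring,
        show ((j+1:ℕ):ℤ) + 1 - 3 = ((j:ℕ):ℤ) - 1 by push_cast; ring,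
        show ((j+1:ℕ):ℤ) + 1 = ((j+2:ℕ):ℤ) by push_cast; ring]
      rw [zpow_natCast, zpow_natCast, zpow_natCast, zpow_natCast]
      have hG3 : G ((j:ℕ) - 1) = CapAux.gg q a c d (j - 1) := by
        cases j with
        | zero =>
          rw [show ((0:ℕ):ℤ) - 1 = (-1:ℤ) by norm_num, hGm1]
          rw [show (0:ℕ) - 1 = 0 from rfl, CapAux.gg_zero]
        | succ i =>
          rw [show ((i+1:ℕ):ℤ) - 1 = ((i:ℕ):ℤ) by push_cast; ring,
            show (i+1:ℕ) - 1 = i from rfl]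
          exact hg i
      rw [hg (j+2), hg (j+1), hg j, hG3]
      have E1 := CapAux.gg_succ q a c d (j+1)
      have E2 := CapAux.tt_succ q a c d (j+1)
      have E3 := CapAux.tt_succ q a c d j
      have E4 := CapAux.gg_succ q a c d j
      have hs1 : j + 1 + 1 = j + 2 := rfl
      have hs2 : j + 1 - 1 = j := rfl
      rw [hs1, hs2] at E1 E2
      linear_combination E1 + E2 - c * q^(j+2) * E3 + d * q^(j+2) * E4
end
end

section
/- Let G^P_{k_d}(q;a,b,c,d) be the generating function for coloured partitions in the Primc class 𝒫 (colours a,b,c,d, order 1_a<1_b<1_c<1_d<2_a<⋯, difference matrix P with rows a:(2,1,2,2), b:(1,0,1,1), c:(0,1,0,2), d:(0,1,0,2)) with largest part at most k_d. Then for all k ≥ 2: (1 - c q^k) G^P_{k_d} = ((1 - b c q^{2k})/(1 - b q^k)) G^P_{(k-1)_d} + ((a q^k + d q^k + a d q^{2k})/(1 - b q^{k-1})) G^P_{(k-2)_d} + (a d q^{2k-1}/(1 - b q^{k-2})) G^P_{(k-3)_d}, with G^P_{-1_d} = 1 - b, G^P_{0_d} = 1, and G^P_{1_d} = bq/(1-bq)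 + (1+aq)(1+dq)/(1-cq). -/
noncomputable section

/-- The Primc difference matrix, colours `0 = a`, `1 = b`, `2 = c`, `3 = d`. -/
def priMat : Fin 4 → Fin 4 → ℕ := ![![2,1,2,2],![1,0,1,1],![0,1,0,2],![0,1,0,2]]

/-- A coloured partition (largest part first) in the Primc class `𝒫`:
parts are positive, and a part of colour `x` followed by a part of colour `y` must exceed
it by at least `priMat x y`.  (These gap conditions encode the order
`1_a < 1_b < 1_c < 1_d < 2_a < ⋯`.) -/
def PriValid (l : List (ℕ × Fin 4)) : Prop :=
  (∀ p ∈ l, 1 ≤ p.1) ∧ l.Chain' (fun p r => r.1 + priMat p.2 r.2 ≤ p.1)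

/-- The weight of a coloured partition. -/
def wt4 (l : List (ℕ × Fin 4)) : ℕ := (l.map Prod.fst).sum

/-- The number of parts of colour `i`. -/
def nc4 (l : List (ℕ × Fin 4)) (i : Fin 4) : ℕ := (l.map Prod.snd).count i

namespace Pri

/-- head-cap condition -/
def Cap (f : Fin 4 → ℤ) (l : List (ℕ × Fin 4)) : Prop := ∀ p ∈ l.head?, (p.1 : ℤ) ≤ f p.2

lemma chain_le {x : ℕ × Fin 4} {l : List (ℕ × Fin 4)}
    (h : List.Chain (fun p r => r.1 + priMat p.2 r.2 ≤ p.1) x l) : ∀ p ∈ l, p.1 ≤ x.1 := by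
  induction l generalizing x with
  | nil => simp
  | cons y t ih =>
    unfold List.Chain at h; rw [List.isChain_cons_cons] at h
    intro p hp
    rcases List.mem_cons.mp hp with rfl | hp
    · omega
    · exact le_trans (ih h.2 p hp) (by omega)

lemma parts_le_head {l : List (ℕ × Fin 4)}
    (h : l.Chain' (fun p r => r.1 + priMat p.2 r.2 ≤ p.1)) :
    ∀ p ∈ l, ∀ h0 ∈ l.head?, p.1 ≤ h0.1 := by
  cases l with
  | nil => simp
  | cons x t =>
    intro p hp h0 hh0
    simp only [List.head?_cons, Option.mem_def, Option.some.injEq] at hh0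
    subst hh0
    rcases List.mem_cons.mp hp with rfl | hp
    · exact le_refl _
    · exact chain_le h p hp


variable (q A B C D : ℂ)

/-- colour weight -/
def w : Fin 4 → ℂ := ![A, B, C, D]

def term (l : List (ℕ × Fin 4)) : ℂ :=
  q ^ wt4 l * A ^ nc4 l 0 * B ^ nc4 l 1 * C ^ nc4 l 2 * D ^ nc4 l 3

open Classical in
def S (f : Fin 4 → ℤ) : ℂ := ∑' l : List (ℕ × Fin 4),
  if PriValid l ∧ Cap f l then term q A B C D l else 0

lemma term_nil : term q A B C D [] = 1 := by simp [term, wt4, nc4]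

lemma wt4_cons (p : ℕ × Fin 4) (t : List (ℕ × Fin 4)) : wt4 (p :: t) = p.1 + wt4 t := by
  simp [wt4]

lemma nc4_cons (p : ℕ × Fin 4) (t : List (ℕ × Fin 4)) (i : Fin 4) :
    nc4 (p :: t) i = nc4 t i + if p.2 = i then 1 else 0 := by
  simp [nc4, List.count_cons]

lemma term_cons (m : ℕ) (x : Fin 4) (t : List (ℕ × Fin 4)) :
    term q A B C D ((m, x) :: t) = w A B C D x * q ^ m * term q A B C D t := by
  fin_cases x <;>
    simp (config := { decide := true }) [term, w, wt4_cons, nc4_cons, pow_add] <;> ring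

/-- validity of a cons -/
lemma valid_cons (m : ℕ) (x : Fin 4) (t : List (ℕ × Fin 4)) :
    PriValid ((m, x) :: t) ↔ 1 ≤ m ∧ PriValid t ∧ Cap (fun y => (m : ℤ) - priMat x y) t := by
  constructor
  · rintro ⟨h1, h2⟩
    have h2' := List.isChain_cons.mp h2
    refine ⟨h1 (m, x) (by simp), ⟨fun p hp => h1 p (by simp [hp]), h2'.2⟩, ?_⟩
    intro p hp
    have h5 : p.1 + priMat x p.2 ≤ m := h2'.1 p hp
    have : (p.1 : ℤ) ≤ (m : ℤ) - priMat x p.2 := by omega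
    exact this
  · rintro ⟨h1, ⟨h2, h3⟩, h4⟩
    refine ⟨?_, List.isChain_cons.mpr ⟨?_, h3⟩⟩
    · intro p hp
      rcases List.mem_cons.mp hp with rfl | hp
      · exact h1
      · exact h2 p hp
    · intro p hp
      have h5 : (p.1 : ℤ) ≤ (m : ℤ) - priMat x p.2 := h4 p hp
      show p.1 + priMat x p.2 ≤ m
      omega

lemma valid_nil : PriValid [] := ⟨by simp, List.isChain_nil⟩

lemma cap_nil (f : Fin 4 → ℤ) : Cap f [] := by simp [Cap]

/-- if the cap is ≤ k then all parts are ≤ k -/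
lemma parts_le_of_cap {f : Fin 4 → ℤ} {k : ℕ} (hf : ∀ y, f y ≤ (k : ℤ))
    {l : List (ℕ × Fin 4)} (hv : PriValid l) (hcap : Cap f l) : ∀ p ∈ l, p.1 ≤ k := by
  intro p hp
  cases l with
  | nil => simp at hp
  | cons x t =>
    have h1 : p.1 ≤ x.1 := parts_le_head hv.2 p hp x (by simp)
    have h2 := hcap x (by simp)
    have := hf x.2
    omega

/-- conversely -/
lemma cap_const_of_parts_le {k : ℕ} {l : List (ℕ × Fin 4)} (h : ∀ p ∈ l, p.1 ≤ k) :
    Cap (fun _ => (k : ℤ)) l := by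
  intro p hp
  exact_mod_cast Nat.cast_le.mpr (h p (List.mem_of_mem_head? hp))

/-! ### Summability -/

def EqChain (cs : List (Fin 4)) : Prop := cs.Chain' (fun x y => priMat x y = 0)

lemma pri_no_zero : ∀ y z : Fin 4, priMat y z = 0 → y ≠ 0 := by decide

lemma pri_unique : ∀ x y y' : Fin 4,
    priMat x y = 0 → priMat x y' = 0 → y ≠ 0 → y' ≠ 0 → y = y' := by decide

lemma eqChain_second {x y z : Fin 4} {v : List (Fin 4)}
    (h : EqChain (x :: y :: z :: v)) : priMat x y = 0 ∧ y ≠ 0 := by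
  have h1 : priMat x y = 0 := (List.isChain_cons_cons.mp h).1
  have h2 : priMat y z = 0 := (List.isChain_cons_cons.mp (List.isChain_cons_cons.mp h).2).1
  exact ⟨h1, pri_no_zero y z h2⟩

/-- An `EqChain` colour list is determined by its head, last entry and length. -/
lemma eqChain_ext : ∀ (n : ℕ) (cs cs' : List (Fin 4)), EqChain cs → EqChain cs' →
    cs.length = n → cs'.length = n → cs.head? = cs'.head? → cs.getLast? = cs'.getLast? →
    cs = cs' := by
  intro n
  induction n with
  | zero =>
    intro cs cs' _ _ h1 h2 _ _
    rw [List.length_eq_zero_iff] at h1 h2; rw [h1, h2]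
  | succ n ih =>
    intro cs cs' hc hc' h1 h2 h3 h4
    match cs, cs' with
    | x :: t, x' :: t' =>
      simp only [List.head?_cons, Option.some.injEq] at h3
      subst h3
      match n, t, t' with
      | 0, t, t' =>
        simp only [List.length_cons, Nat.succ.injEq] at h1 h2
        rw [List.length_eq_zero_iff] at h1 h2; rw [h1, h2]
      | (n+1), y :: u, y' :: u' =>
        match n, u, u' with
        | 0, u, u' =>
          simp only [List.length_cons, Nat.succ.injEq] at h1 h2
          rw [List.length_eq_zero_iff] at h1 h2
          subst h1; subst h2
          simp only [List.getLast?_cons_cons, List.getLast?_singleton,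
            Option.some.injEq] at h4
          rw [h4]
        | (n+1), z :: v, z' :: v' =>
          have e1 := eqChain_second hc
          have e2 := eqChain_second hc'
          have hyy : y = y' := pri_unique x y y' e1.1 e2.1 e1.2 e2.2
          subst hyy
          have htail : y :: z :: v = y :: z' :: v' := by
            refine ih _ _ (List.isChain_cons_cons.mp hc).2 (List.isChain_cons_cons.mp hc').2 ?_ ?_ rfl ?_
            · simpa using h1
            · simpa using h2
            · simpa only [List.getLast?_cons_cons] using h4
          rw [htail]

open Classical in
/-- the geometric bound for an equal-size block -/
def hBound (r : ℝ) (K : ℕ) (cs : List (Fin 4)) : ℝ :=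
  if EqChain cs then r ^ (K * cs.length) else 0

lemma summable_hBound {r : ℝ} (h0 : 0 ≤ r) (h1 : r < 1) (K : ℕ) (hK : 1 ≤ K) :
    Summable (hBound r K) := by
  classical
  -- the comparison family on triples
  have hF2 : Summable (fun t : Option (Fin 4) × Option (Fin 4) × ℕ => r ^ (K * t.2.2)) := by
    have hgeo : Summable (fun n : ℕ => r ^ (K * n)) := by
      have h : Summable (fun n : ℕ => (r ^ K) ^ n) :=
        summable_geometric_of_lt_one (pow_nonneg h0 K) (pow_lt_one₀ h0 h1 (by omega))
      convert h using 2 with n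
      rw [pow_mul]
    have h2 : Summable (fun t : Option (Fin 4) × ℕ => (1 : ℝ) * r ^ (K * t.2)) :=
      Summable.mul_of_nonneg (f := fun _ : Option (Fin 4) => (1 : ℝ))
        (g := fun n : ℕ => r ^ (K * n)) Summable.of_finite hgeo
        (Pi.le_def.mpr fun _ => zero_le_one) (Pi.le_def.mpr fun n => pow_nonneg h0 _)
    have h3 : Summable (fun t : Option (Fin 4) × Option (Fin 4) × ℕ =>
        (1 : ℝ) * ((1 : ℝ) * r ^ (K * t.2.2))) :=
      Summable.mul_of_nonneg (f := fun _ : Option (Fin 4) => (1 : ℝ))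
        (g := fun t : Option (Fin 4) × ℕ => (1 : ℝ) * r ^ (K * t.2)) Summable.of_finite h2
        (Pi.le_def.mpr fun _ => zero_le_one)
        (Pi.le_def.mpr fun t => mul_nonneg zero_le_one (pow_nonneg h0 _))
    simpa using h3
  -- restrict to the subtype
  have hrange : ∀ cs ∉ Set.range (Subtype.val : {cs // EqChain cs} → List (Fin 4)),
      hBound r K cs = 0 := by
    intro cs hcs
    rw [Subtype.range_coe_subtype] at hcs
    rw [hBound, if_neg (show ¬ EqChain cs from fun h => hcs h)]
  rw [← Function.Injective.summable_iff Subtype.val_injective hrange]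
  have hφ : Function.Injective (fun cs : {cs // EqChain cs} =>
      ((cs.1.head?, cs.1.getLast?, cs.1.length) : Option (Fin 4) × Option (Fin 4) × ℕ)) := by
    rintro ⟨cs, hc⟩ ⟨cs', hc'⟩ h
    simp only [Prod.mk.injEq] at h
    exact Subtype.ext (eqChain_ext cs'.length cs cs' hc hc' h.2.2 rfl h.1 h.2.1)
  have := hF2.comp_injective hφ
  apply this.congr
  intro cs
  simp [hBound, Function.comp, cs.2]

open Classical in
/-- master majorant: valid lists with parts at most `k`, weight `‖q‖^(wt)` -/
def mG (r : ℝ) (k : ℕ) (l : List (ℕ × Fin 4)) : ℝ :=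
  if PriValid l ∧ ∀ p ∈ l, p.1 ≤ k then r ^ wt4 l else 0

lemma mG_nonneg {r : ℝ} (h0 : 0 ≤ r) (k : ℕ) (l : List (ℕ × Fin 4)) : 0 ≤ mG r k l := by
  unfold mG; split <;> positivity

lemma eqchain_of_const : ∀ (tw : List (ℕ × Fin 4)) (K : ℕ), (∀ p ∈ tw, p.1 = K) →
    tw.Chain' (fun p r => r.1 + priMat p.2 r.2 ≤ p.1) →
    tw.Chain' (fun a b => priMat a.2 b.2 = 0) := by
  intro tw
  induction tw with
  | nil => intro K _ _; exact List.isChain_nil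
  | cons p t iht =>
    intro K hK hc
    rcases t with - | ⟨p', t⟩
    · exact List.isChain_singleton _
    · unfold List.Chain' at hc ⊢; rw [List.isChain_cons_cons] at hc ⊢
      refine ⟨?_, iht K (fun x hx => hK x (by simp [hx])) hc.2⟩
      have e1 := hK p (by simp)
      have e2 := hK p' (by simp)
      have := hc.1
      omega

lemma summable_mG {r : ℝ} (h0 : 0 ≤ r) (h1 : r < 1) : ∀ k, Summable (mG r k) := by
  intro k
  induction k with
  | zero =>
    apply summable_of_ne_finset_zero (s := {([] : List (ℕ × Fin 4))})
    intro l hl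
    simp only [Finset.mem_singleton] at hl
    unfold mG
    rw [if_neg]
    rintro ⟨⟨hpos, -⟩, hle⟩
    match l, hl with
    | p :: t, _ =>
      have := hpos p (by simp)
      have := hle p (by simp)
      omega
  | succ k ihk =>
    set K := k + 1 with hK
    set pred : ℕ × Fin 4 → Bool := fun p => p.1 == K with hpred
    set Ψ : List (ℕ × Fin 4) → List (Fin 4) × List (ℕ × Fin 4) :=
      fun l => ((l.takeWhile pred).map Prod.snd, l.dropWhile pred) with hΨ
    have hleft : Function.LeftInverse
        (fun pr : List (Fin 4) × List (ℕ × Fin 4) => pr.1.map (fun x => (K, x)) ++ pr.2) Ψ := by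
      intro l
      simp only [hΨ, List.map_map]
      have : ∀ p ∈ l.takeWhile pred, ((fun x => (K, x)) ∘ Prod.snd) p = id p := by
        intro p hp
        have := List.mem_takeWhile_imp hp
        rw [hpred, beq_iff_eq] at this
        simp [Function.comp, ← this]
      rw [List.map_congr_left this, List.map_id, List.takeWhile_append_dropWhile]
    have hinj : Function.Injective Ψ := hleft.injective
    set F : List (Fin 4) × List (ℕ × Fin 4) → ℝ :=
      fun pr => hBound r K pr.1 * mG r k pr.2 with hF
    have hFs : Summable F :=
      Summable.mul_of_nonneg (f := hBound r K) (g := mG r k)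
        (summable_hBound h0 h1 K (by omega)) ihk
        (Pi.le_def.mpr fun cs => by unfold hBound; split <;> positivity)
        (Pi.le_def.mpr fun l => mG_nonneg h0 k l)
    refine Summable.of_nonneg_of_le (mG_nonneg h0 K) ?_ (hFs.comp_injective hinj)
    intro l
    show mG r K l ≤ F (Ψ l)
    by_cases hcond : PriValid l ∧ ∀ p ∈ l, p.1 ≤ K
    swap
    · rw [mG, if_neg hcond]
      exact mul_nonneg (by unfold hBound; split <;> positivity) (mG_nonneg h0 k _)
    obtain ⟨⟨hpos, hchain⟩, hle⟩ := hcond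
    set tw := l.takeWhile pred with htw
    set dw := l.dropWhile pred with hdw
    have hsplit : tw ++ dw = l := List.takeWhile_append_dropWhile
    have htwK : ∀ p ∈ tw, p.1 = K := by
      intro p hp
      have := List.mem_takeWhile_imp hp
      rwa [hpred, beq_iff_eq] at this
    have hchain2 : (tw ++ dw).Chain' (fun p r => r.1 + priMat p.2 r.2 ≤ p.1) := by
      rw [hsplit]; exact hchain
    obtain ⟨hctw, hcdw, -⟩ := List.isChain_append.mp hchain2
    -- EqChain on the colour list of tw
    have heq : EqChain (tw.map Prod.snd) := by
      unfold EqChain List.Chain'; rw [List.isChain_map]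
      exact eqchain_of_const tw K htwK hctw
    -- weight decomposition
    have hwt : wt4 l = K * tw.length + wt4 dw := by
      rw [← hsplit, wt4, List.map_append, List.sum_append]
      have : tw.map Prod.fst = List.replicate tw.length K := by
        have := List.eq_replicate_of_mem (l := tw.map Prod.fst) (a := K) ?_
        · simpa using this
        · intro b hb
          obtain ⟨p, hp, rfl⟩ := List.mem_map.mp hb
          exact htwK p hp
      rw [this, List.sum_replicate, smul_eq_mul, wt4]
      ring
    -- dw is valid with parts ≤ k
    have hdwvalid : PriValid dw := by
      refine ⟨fun p hp => hpos p ?_, hcdw⟩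
      rw [← hsplit]; exact List.mem_append_right _ hp
    have hdwle : ∀ p ∈ dw, p.1 ≤ k := by
      intro p hp
      rcases hh : dw.head? with - | h0'
      · rw [List.head?_eq_none_iff] at hh
        simp [hh] at hp
      · have hple : p.1 ≤ h0'.1 := parts_le_head hcdw p hp h0' (by simp [hh])
        have hhK : ¬ (pred h0' = true) := by
          have := List.head?_dropWhile_not pred l
          rw [← hdw] at this
          rcases hhh : (l.dropWhile pred).head? with - | y
          · rw [← hdw] at hhh; rw [hhh] at hh; exact absurd hh (by simp)
          · rw [← hdw] at hhh
            rw [hhh] at hh this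
            simp only [Option.some.injEq] at hh
            subst hh
            simp [this]
        rw [hpred] at hhK
        simp only [beq_iff_eq] at hhK
        have : h0'.1 ≤ K := hle h0' (by
          rw [← hsplit]; exact List.mem_append_right _ (List.mem_of_mem_head? (by simp [hh])))
        omega
    -- conclude
    rw [mG, if_pos ⟨⟨hpos, hchain⟩, hle⟩]
    have : F (Ψ l) = r ^ (K * tw.length) * r ^ (wt4 dw) := by
      rw [hF]
      simp only [hΨ, ← htw, ← hdw]
      rw [hBound, if_pos heq, mG, if_pos ⟨hdwvalid, hdwle⟩, List.length_map]
    rw [this, ← pow_add, hwt]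

/-! ### tsum machinery -/

section tsums

variable {q A B C D : ℂ} (hq : ‖q‖ < 1) (hA : ‖A‖ ≤ 1) (hB : ‖B‖ ≤ 1) (hC : ‖C‖ ≤ 1)
  (hD : ‖D‖ ≤ 1)

include hA hB hC hD in
lemma term_norm_le (l : List (ℕ × Fin 4)) : ‖term q A B C D l‖ ≤ ‖q‖ ^ wt4 l := by
  have h : ‖term q A B C D l‖ =
      ‖q‖ ^ wt4 l * ‖A‖ ^ nc4 l 0 * ‖B‖ ^ nc4 l 1 * ‖C‖ ^ nc4 l 2 * ‖D‖ ^ nc4 l 3 := by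
    simp [term, norm_mul, norm_pow]
  rw [h]
  have e1 : ‖A‖ ^ nc4 l 0 ≤ 1 := pow_le_one₀ (norm_nonneg _) hA
  have e2 : ‖B‖ ^ nc4 l 1 ≤ 1 := pow_le_one₀ (norm_nonneg _) hB
  have e3 : ‖C‖ ^ nc4 l 2 ≤ 1 := pow_le_one₀ (norm_nonneg _) hC
  have e4 : ‖D‖ ^ nc4 l 3 ≤ 1 := pow_le_one₀ (norm_nonneg _) hD
  have p0 : (0:ℝ) ≤ ‖q‖ ^ wt4 l := pow_nonneg (norm_nonneg _) _
  have p1 : (0:ℝ) ≤ ‖A‖ ^ nc4 l 0 := pow_nonneg (norm_nonneg _) _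
  have p2 : (0:ℝ) ≤ ‖B‖ ^ nc4 l 1 := pow_nonneg (norm_nonneg _) _
  have p3 : (0:ℝ) ≤ ‖C‖ ^ nc4 l 2 := pow_nonneg (norm_nonneg _) _
  calc ‖q‖ ^ wt4 l * ‖A‖ ^ nc4 l 0 * ‖B‖ ^ nc4 l 1 * ‖C‖ ^ nc4 l 2 * ‖D‖ ^ nc4 l 3
      ≤ ‖q‖ ^ wt4 l * 1 * 1 * 1 * 1 := by gcongr
    _ = ‖q‖ ^ wt4 l := by ring

include hq hA hB hC hD in
open Classical in
lemma summable_S {f : Fin 4 → ℤ} {k : ℕ} (hf : ∀ y, f y ≤ (k : ℤ)) :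
    Summable (fun l : List (ℕ × Fin 4) =>
      if PriValid l ∧ Cap f l then term q A B C D l else 0) := by
  classical
  apply Summable.of_norm_bounded (summable_mG (norm_nonneg q) hq k)
  intro l
  by_cases h : PriValid l ∧ Cap f l
  · rw [if_pos h, mG, if_pos ⟨h.1, parts_le_of_cap hf h.1 h.2⟩]
    exact term_norm_le hA hB hC hD l
  · rw [if_neg h]
    simpa using mG_nonneg (norm_nonneg q) k l

include hq hA hB hC hD in
open Classical in
lemma summable_head {m : ℕ} {x : Fin 4} {k : ℕ} (hmk : m ≤ k) :
    Summable (fun l : List (ℕ × Fin 4) =>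
      if PriValid l ∧ l.head? = some (m, x) then term q A B C D l else 0) := by
  classical
  apply Summable.of_norm_bounded (summable_mG (norm_nonneg q) hq k)
  intro l
  by_cases h : PriValid l ∧ l.head? = some (m, x)
  · have hparts : ∀ p ∈ l, p.1 ≤ k := by
      intro p hp
      have := parts_le_head h.1.2 p hp (m, x) (by simp [h.2])
      omega
    rw [if_pos h, mG, if_pos ⟨h.1, hparts⟩]
    exact term_norm_le hA hB hC hD l
  · rw [if_neg h]
    simpa using mG_nonneg (norm_nonneg q) k l

include hq hA hB hC hD in
/-- The peel lemma: removing a largest part of size `m` and colour `x`. -/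
lemma peel (f : Fin 4 → ℤ) (x : Fin 4) (m k : ℕ) (hm : 1 ≤ m) (hfx : f x = (m : ℤ))
    (hf : ∀ y, f y ≤ (k : ℤ)) :
    S q A B C D f = S q A B C D (Function.update f x ((m : ℤ) - 1)) +
      w A B C D x * q ^ m * S q A B C D (fun y => (m : ℤ) - priMat x y) := by
  classical
  set f' := Function.update f x ((m : ℤ) - 1) with hf'def
  set g := fun y => (m : ℤ) - priMat x y with hgdef
  have hmk : m ≤ k := by have := hf x; omega
  have hf' : ∀ y, f' y ≤ (k : ℤ) := by
    intro y
    by_cases h : y = x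
    · subst h; rw [hf'def, Function.update_self]; have := hf y; omega
    · rw [hf'def, Function.update_of_ne h]; exact hf y
  have hg : ∀ y, g y ≤ (k : ℤ) := by
    intro y; rw [hgdef]; simp only; omega
  -- pointwise decomposition
  have hpt : ∀ l : List (ℕ × Fin 4),
      (if PriValid l ∧ Cap f l then term q A B C D l else 0) =
      (if PriValid l ∧ Cap f' l then term q A B C D l else 0) +
      (if PriValid l ∧ l.head? = some (m, x) then term q A B C D l else 0) := by
    intro l
    cases l with
    | nil =>
      rw [if_pos ⟨valid_nil, cap_nil f⟩, if_pos ⟨valid_nil, cap_nil f'⟩, if_neg (by simp)]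
      ring
    | cons p t =>
      by_cases hv : PriValid (p :: t)
      swap
      · rw [if_neg (fun h => hv h.1), if_neg (fun h => hv h.1), if_neg (fun h => hv h.1)]
        ring
      have hcap : ∀ f'' : Fin 4 → ℤ, Cap f'' (p :: t) ↔ (p.1 : ℤ) ≤ f'' p.2 := by
        intro f''
        constructor
        · intro h; exact h p (by simp)
        · intro h p' hp'
          simp only [List.head?_cons, Option.mem_def, Option.some.injEq] at hp'
          subst hp'; exact h
      by_cases hpx : p = (m, x)
      · subst hpx
        rw [if_pos ⟨hv, (hcap f).mpr (by rw [hfx])⟩, if_neg, if_pos ⟨hv, by simp⟩]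
        · ring
        · rintro ⟨-, hc⟩
          have := (hcap f').mp hc
          rw [hf'def, Function.update_self] at this
          simp only at this
          omega
      · rw [if_neg (by simp [hpx] : ¬(PriValid ((p :: t)) ∧ (p :: t).head? = some (m, x)))]
        have hiff : Cap f (p :: t) ↔ Cap f' (p :: t) := by
          rw [hcap f, hcap f']
          by_cases hcol : p.2 = x
          · rw [hf'def, hcol, Function.update_self, hfx]
            have hne : p.1 ≠ m := by
              intro hh; exact hpx (Prod.ext hh hcol)
            omega
          · rw [hf'def, Function.update_of_ne hcol]
        rw [if_congr (and_congr_right fun _ => hiff) rfl rfl]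
        ring
  -- split the tsum
  have hsum1 := summable_S hq hA hB hC hD hf'
  have hsum2 := summable_head hq hA hB hC hD (m := m) (x := x) hmk
  have hsplit : S q A B C D f =
      S q A B C D f' + ∑' l : List (ℕ × Fin 4),
        (if PriValid l ∧ l.head? = some (m, x) then term q A B C D l else 0) := by
    rw [S, tsum_congr hpt, Summable.tsum_add hsum1 hsum2]; rfl
  rw [hsplit]
  congr 1
  -- compute the head sum
  have hinj : Function.Injective (List.cons ((m : ℕ), x)) := fun t t' h => by
    simpa using h
  have hsupp : Function.support (fun l : List (ℕ × Fin 4) =>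
      if PriValid l ∧ l.head? = some (m, x) then term q A B C D l else 0) ⊆
      Set.range (List.cons ((m : ℕ), x)) := by
    intro l hl
    rcases l with - | ⟨p, t⟩
    · simp at hl
    · by_cases h : PriValid (p :: t) ∧ (p :: t).head? = some (m, x)
      · obtain ⟨-, h2⟩ := h
        simp only [List.head?_cons, Option.some.injEq] at h2
        exact ⟨t, by rw [h2]⟩
      · rw [Function.mem_support, if_neg h] at hl
        exact absurd rfl hl
  rw [← Function.Injective.tsum_eq hinj hsupp]
  have : ∀ t : List (ℕ × Fin 4),
      (if PriValid ((m, x) :: t) ∧ ((m, x) :: t).head? = some (m, x)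
        then term q A B C D ((m, x) :: t) else 0) =
      w A B C D x * q ^ m * (if PriValid t ∧ Cap g t then term q A B C D t else 0) := by
    intro t
    by_cases h : PriValid t ∧ Cap g t
    · rw [if_pos ⟨(valid_cons m x t).mpr ⟨hm, h.1, h.2⟩, by simp⟩, if_pos h, term_cons]
    · rw [if_neg, if_neg h, mul_zero]
      rintro ⟨hvc, -⟩
      obtain ⟨-, h1, h2⟩ := (valid_cons m x t).mp hvc
      exact h ⟨h1, h2⟩
  rw [tsum_congr this, tsum_mul_left]
  rfl

/-- caps that are nonpositive give only the empty partition -/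
lemma S_eq_one {f : Fin 4 → ℤ} (hf : ∀ y, f y ≤ 0) : S q A B C D f = 1 := by
  classical
  rw [S, tsum_eq_single ([] : List (ℕ × Fin 4))]
  · rw [if_pos ⟨valid_nil, cap_nil f⟩, term_nil]
  · intro l hl
    rcases l with - | ⟨p, t⟩
    · exact absurd rfl hl
    · rw [if_neg]
      rintro ⟨hv, hc⟩
      have h1 : 1 ≤ p.1 := hv.1 p (by simp)
      have h2 : (p.1 : ℤ) ≤ f p.2 := hc p (by simp)
      have := hf p.2
      omega

end tsums

/-! ### caps and recurrence equations -/

def capG (k : ℤ) : Fin 4 → ℤ := fun _ => k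
def capB (k : ℤ) : Fin 4 → ℤ := fun y => if y = 1 then k else k - 1
def capC (k : ℤ) : Fin 4 → ℤ := fun y => if y = 0 ∨ y = 2 then k else if y = 1 then k - 1 else k - 2
def capD (k : ℤ) : Fin 4 → ℤ := fun y => if y = 3 then k - 1 else k
def capD2 (k : ℤ) : Fin 4 → ℤ := fun y => if y = 2 ∨ y = 3 then k - 1 else k
def capD3 (k : ℤ) : Fin 4 → ℤ := fun y => if y = 0 then k else k - 1
def capC2 (k : ℤ) : Fin 4 → ℤ := fun y => if y = 0 then k else if y = 3 then k - 2 else k - 1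

section eqs

variable {q A B C D : ℂ} (hq : ‖q‖ < 1) (hA : ‖A‖ ≤ 1) (hB : ‖B‖ ≤ 1) (hC : ‖C‖ ≤ 1)
  (hD : ‖D‖ ≤ 1)

include hq hA hB hC hD

lemma eq1 (k : ℕ) (hk : 1 ≤ k) :
    S q A B C D (capG k) = S q A B C D (capD k) + D * q ^ k * S q A B C D (capC k) := by
  have h := peel hq hA hB hC hD (capG (k : ℤ)) 3 k k hk rfl (fun y => le_refl _)
  rw [show Function.update (capG (k : ℤ)) 3 ((k : ℤ) - 1) = capD (k : ℤ) by
        funext y; fin_cases y <;>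
          simp (config := {decide := true}) [capG, capD, Function.update],
      show (fun y => ((k : ℤ)) - priMat 3 y) = capC (k : ℤ) by
        funext y; fin_cases y <;>
          simp (config := {decide := true}) [capC, priMat] <;> omega,
      show w A B C D 3 = D from rfl] at h
  exact h

lemma eq4 (k : ℕ) (hk : 1 ≤ k) :
    S q A B C D (capB k) = S q A B C D (capG ((k : ℤ) - 1)) +
      B * q ^ k * S q A B C D (capB k) := by
  have h := peel hq hA hB hC hD (capB (k : ℤ)) 1 k k hk rfl
    (fun y => by fin_cases y <;> simp (config := {decide := true}) [capB] <;> omega)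
  rw [show Function.update (capB (k : ℤ)) 1 ((k : ℤ) - 1) = capG ((k : ℤ) - 1) by
        funext y; fin_cases y <;>
          simp (config := {decide := true}) [capG, capB, Function.update],
      show (fun y => ((k : ℤ)) - priMat 1 y) = capB (k : ℤ) by
        funext y; fin_cases y <;>
          simp (config := {decide := true}) [capB, priMat] <;> omega,
      show w A B C D 1 = B from rfl] at h
  exact h

lemma eq2 (k : ℕ) (hk : 1 ≤ k) :
    S q A B C D (capD k) = S q A B C D (capG ((k : ℤ) - 1)) +
      A * q ^ k * S q A B C D (capB ((k : ℤ) - 1)) +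
      B * q ^ k * S q A B C D (capB k) +
      C * q ^ k * S q A B C D (capC k) := by
  have h2 := peel hq hA hB hC hD (capD (k : ℤ)) 2 k k hk rfl
    (fun y => by fin_cases y <;> simp (config := {decide := true}) [capD] <;> omega)
  rw [show Function.update (capD (k : ℤ)) 2 ((k : ℤ) - 1) = capD2 (k : ℤ) by
        funext y; fin_cases y <;>
          simp (config := {decide := true}) [capD, capD2, Function.update],
      show (fun y => ((k : ℤ)) - priMat 2 y) = capC (k : ℤ) by
        funext y; fin_cases y <;>
          simp (config := {decide := true}) [capC, priMat] <;> omega,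
      show w A B C D 2 = C from rfl] at h2
  have h3 := peel hq hA hB hC hD (capD2 (k : ℤ)) 1 k k hk rfl
    (fun y => by fin_cases y <;> simp (config := {decide := true}) [capD2] <;> omega)
  rw [show Function.update (capD2 (k : ℤ)) 1 ((k : ℤ) - 1) = capD3 (k : ℤ) by
        funext y; fin_cases y <;>
          simp (config := {decide := true}) [capD2, capD3, Function.update],
      show (fun y => ((k : ℤ)) - priMat 1 y) = capB (k : ℤ) by
        funext y; fin_cases y <;>
          simp (config := {decide := true}) [capB, priMat] <;> omega,
      show w A B C D 1 = B from rfl] at h3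
  have h4 := peel hq hA hB hC hD (capD3 (k : ℤ)) 0 k k hk rfl
    (fun y => by fin_cases y <;> simp (config := {decide := true}) [capD3] <;> omega)
  rw [show Function.update (capD3 (k : ℤ)) 0 ((k : ℤ) - 1) = capG ((k : ℤ) - 1) by
        funext y; fin_cases y <;>
          simp (config := {decide := true}) [capD3, capG, Function.update],
      show (fun y => ((k : ℤ)) - priMat 0 y) = capB ((k : ℤ) - 1) by
        funext y; fin_cases y <;>
          simp (config := {decide := true}) [capB, priMat] <;> omega,
      show w A B C D 0 = A from rfl] at h4
  linear_combination h2 + h3 + h4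

lemma eq3 (k : ℕ) (hk : 1 ≤ k) :
    S q A B C D (capC k) = S q A B C D (capD ((k : ℤ) - 1)) +
      A * q ^ k * S q A B C D (capB ((k : ℤ) - 1)) +
      C * q ^ k * S q A B C D (capC k) := by
  have h6 := peel hq hA hB hC hD (capC (k : ℤ)) 2 k k hk rfl
    (fun y => by fin_cases y <;> simp (config := {decide := true}) [capC] <;> omega)
  rw [show Function.update (capC (k : ℤ)) 2 ((k : ℤ) - 1) = capC2 (k : ℤ) by
        funext y; fin_cases y <;>
          simp (config := {decide := true}) [capC, capC2, Function.update],
      show (fun y => ((k : ℤ)) - priMat 2 y) = capC (k : ℤ) by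
        funext y; fin_cases y <;>
          simp (config := {decide := true}) [capC, priMat] <;> omega,
      show w A B C D 2 = C from rfl] at h6
  have h7 := peel hq hA hB hC hD (capC2 (k : ℤ)) 0 k k hk rfl
    (fun y => by fin_cases y <;> simp (config := {decide := true}) [capC2] <;> omega)
  rw [show Function.update (capC2 (k : ℤ)) 0 ((k : ℤ) - 1) = capD ((k : ℤ) - 1) by
        funext y; fin_cases y <;>
          simp (config := {decide := true}) [capC2, capD, Function.update] <;> omega,
      show (fun y => ((k : ℤ)) - priMat 0 y) = capB ((k : ℤ) - 1) by
        funext y; fin_cases y <;>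
          simp (config := {decide := true}) [capB, priMat] <;> omega,
      show w A B C D 0 = A from rfl] at h7
  linear_combination h6 + h7

end eqs

section base

variable (q A B C D : ℂ)

lemma baseG : S q A B C D (capG 0) = 1 :=
  S_eq_one (fun y => le_refl _)

lemma baseB : S q A B C D (capB 0) = 1 :=
  S_eq_one (fun y => by fin_cases y <;> simp (config := {decide := true}) [capB])

lemma baseC : S q A B C D (capC 0) = 1 :=
  S_eq_one (fun y => by fin_cases y <;> simp (config := {decide := true}) [capC])

lemma baseD : S q A B C D (capD 0) = 1 :=
  S_eq_one (fun y => by fin_cases y <;> simp (config := {decide := true}) [capD])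

end base


end Pri

open Pri

/-- The recurrence for the Primc generating function `G^P_{k_d}` (generating function for
coloured partitions in the Primc class with largest part at most `k`, tracking weight
by `q` and the numbers of parts of colours `a,b,c,d`), with the convention
`G^P_{-1_d} = 1 - b`: one has `G^P_{0_d} = 1`,
`G^P_{1_d} = bq/(1-bq) + (1+aq)(1+dq)/(1-cq)`, and for all `k ≥ 2`,
`(1-cq^k) G_k = ((1-bcq^{2k})/(1-bq^k)) G_{k-1}
  + ((aq^k+dq^k+adq^{2k})/(1-bq^{k-1})) G_{k-2} + (adq^{2k-1}/(1-bq^{k-2})) G_{k-3}`. -/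
theorem primc_recurrence (q a b c d : ℂ) (hq : ‖q‖ < 1) (ha : ‖a‖ ≤ 1) (hb : ‖b‖ ≤ 1)
    (hc : ‖c‖ ≤ 1) (hd : ‖d‖ ≤ 1) (hb1 : b ≠ 1) (G : ℤ → ℂ)
    (hG : ∀ k : ℕ, G k =
      ∑' l : {l : List (ℕ × Fin 4) // PriValid l ∧ ∀ p ∈ l, p.1 ≤ k},
        q ^ wt4 l.1 * a ^ nc4 l.1 0 * b ^ nc4 l.1 1 * c ^ nc4 l.1 2 * d ^ nc4 l.1 3)
    (hGm1 : G (-1) = 1 - b) :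
    G 0 = 1 ∧
    G 1 = b * q / (1 - b * q) + (1 + a * q) * (1 + d * q) / (1 - c * q) ∧
    ∀ k : ℤ, 2 ≤ k →
      (1 - c * q ^ k) * G k =
        (1 - b * c * q ^ (2 * k)) / (1 - b * q ^ k) * G (k - 1) +
        (a * q ^ k + d * q ^ k + a * d * q ^ (2 * k)) / (1 - b * q ^ (k - 1)) * G (k - 2) +
        a * d * q ^ (2 * k - 1) / (1 - b * q ^ (k - 2)) * G (k - 3) := by
  classical
  -- link between G and S
  have hlink : ∀ n : ℕ, G (n : ℤ) = S q a b c d (capG (n : ℤ)) := by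
    intro n
    rw [hG n]
    have h1 : (∑' l : {l : List (ℕ × Fin 4) // PriValid l ∧ ∀ p ∈ l, p.1 ≤ n},
        q ^ wt4 l.1 * a ^ nc4 l.1 0 * b ^ nc4 l.1 1 * c ^ nc4 l.1 2 * d ^ nc4 l.1 3) =
        ∑' l : ↑{l : List (ℕ × Fin 4) | PriValid l ∧ ∀ p ∈ l, p.1 ≤ n},
          term q a b c d ↑l := rfl
    rw [h1, tsum_subtype, S]
    apply tsum_congr
    intro l
    rw [Set.indicator_apply]
    by_cases hmem : l ∈ {l : List (ℕ × Fin 4) | PriValid l ∧ ∀ p ∈ l, p.1 ≤ n}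
    · rw [if_pos hmem, if_pos ⟨hmem.1, cap_const_of_parts_le hmem.2⟩]
    · rw [if_neg hmem, if_neg]
      intro hcon
      exact hmem ⟨hcon.1, parts_le_of_cap (k := n) (fun y => le_refl _) hcon.1 hcon.2⟩
  -- nonvanishing denominators
  have hbne : ∀ m : ℕ, 1 ≤ m → (1 : ℂ) - b * q ^ m ≠ 0 := by
    intro m hm h
    have h2 : b * q ^ m = 1 := by linear_combination -h
    have h3 : ‖b * q ^ m‖ < 1 := by
      rw [norm_mul, norm_pow]
      calc ‖b‖ * ‖q‖ ^ m ≤ 1 * ‖q‖ ^ m := by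
            gcongr
        _ = ‖q‖ ^ m := one_mul _
        _ ≤ ‖q‖ ^ 1 := pow_le_pow_of_le_one (norm_nonneg q) (le_of_lt hq) hm
        _ < 1 := by simpa using hq
    rw [h2] at h3
    simp at h3
  have hcne : ∀ m : ℕ, 1 ≤ m → (1 : ℂ) - c * q ^ m ≠ 0 := by
    intro m hm h
    have h2 : c * q ^ m = 1 := by linear_combination -h
    have h3 : ‖c * q ^ m‖ < 1 := by
      rw [norm_mul, norm_pow]
      calc ‖c‖ * ‖q‖ ^ m ≤ 1 * ‖q‖ ^ m := by gcongr
        _ = ‖q‖ ^ m := one_mul _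
        _ ≤ ‖q‖ ^ 1 := pow_le_pow_of_le_one (norm_nonneg q) (le_of_lt hq) hm
        _ < 1 := by simpa using hq
    rw [h2] at h3
    simp at h3
  have hb0 : (1 : ℂ) - b ≠ 0 := sub_ne_zero.mpr (fun h => hb1 h.symm)
  -- the key relation G (n-1) = (1 - b q^n) * S(capB n)
  have hSB : ∀ n : ℕ, G ((n : ℤ) - 1) = (1 - b * q ^ n) * S q a b c d (capB (n : ℤ)) := by
    intro n
    cases n with
    | zero =>
      rw [show ((0 : ℕ) : ℤ) - 1 = -1 by norm_num, hGm1,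
        show ((0 : ℕ) : ℤ) = (0 : ℤ) by norm_num, baseB]
      ring
    | succ j =>
      have E4c := eq4 hq ha hb hc hd (j + 1) (by omega)
      rw [show (((j + 1 : ℕ)) : ℤ) - 1 = (j : ℤ) by push_cast; ring] at E4c ⊢
      rw [hlink j]
      linear_combination -E4c
  have hcancel : ∀ X Z y : ℂ, y ≠ 0 → X / y * (y * Z) = X * Z := by
    intro X Z y hy
    field_simp
  refine ⟨?_, ?_, ?_⟩
  · have h := hlink 0
    rw [show ((0 : ℕ) : ℤ) = (0 : ℤ) by norm_num] at h
    rw [h, baseG]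
  · -- G 1
    have h1 := eq1 hq ha hb hc hd 1 (le_refl 1)
    have h2 := eq2 hq ha hb hc hd 1 (le_refl 1)
    have h3 := eq3 hq ha hb hc hd 1 (le_refl 1)
    have h4 := eq4 hq ha hb hc hd 1 (le_refl 1)
    rw [show ((1 : ℕ) : ℤ) - 1 = (0 : ℤ) by norm_num] at h2 h3 h4
    rw [baseG, baseB] at h2
    rw [baseD, baseB] at h3
    rw [baseG] at h4
    have hl1 := hlink 1
    rw [show ((1 : ℕ) : ℤ) = (1 : ℤ) by norm_num] at hl1
    rw [hl1]
    rw [show ((1 : ℕ) : ℤ) = (1 : ℤ) by norm_num] at h1 h2 h3 h4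
    have hbq : (1 : ℂ) - b * q ≠ 0 := by simpa using hbne 1 (le_refl 1)
    have hcq : (1 : ℂ) - c * q ≠ 0 := by simpa using hcne 1 (le_refl 1)
    rw [div_add_div _ _ hbq hcq, eq_div_iff (mul_ne_zero hbq hcq)]
    have hq1 : (q : ℂ) ^ (1 : ℕ) = q := pow_one q
    rw [hq1] at h1 h2 h3 h4
    linear_combination ((1 - b*q) * (1 - c*q)) * h1 + ((1 - b*q) * (1 - c*q)) * h2 +
      (1 - b*q) * (c + d) * q * h3 + b * q * (1 - c*q) * h4
  · -- the recurrence
    intro k hk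
    obtain ⟨m, rfl⟩ : ∃ m : ℕ, k = (m : ℤ) + 2 := ⟨(k - 2).toNat, by omega⟩
    have E1a := eq1 hq ha hb hc hd (m + 2) (by omega)
    have E2a := eq2 hq ha hb hc hd (m + 2) (by omega)
    have E3a := eq3 hq ha hb hc hd (m + 2) (by omega)
    have E4a := eq4 hq ha hb hc hd (m + 2) (by omega)
    have E1b := eq1 hq ha hb hc hd (m + 1) (by omega)
    have E2b := eq2 hq ha hb hc hd (m + 1) (by omega)
    have E4b := eq4 hq ha hb hc hd (m + 1) (by omega)
    have c1 : (((m + 2 : ℕ)) : ℤ) - 1 = ((m + 1 : ℕ) : ℤ) := by push_cast; ring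
    have c2 : (((m + 1 : ℕ)) : ℤ) - 1 = ((m : ℕ) : ℤ) := by push_cast; ring
    rw [c1] at E2a E3a E4a
    rw [c2] at E2b E4b
    -- zpow to pow conversions
    have z1 : q ^ ((m : ℤ) + 2) = q ^ (m + 2 : ℕ) := by
      rw [← zpow_natCast]
      congr 1
      all_goals (push_cast; ring)
    have z2 : q ^ (2 * ((m : ℤ) + 2)) = q ^ (2 * m + 4 : ℕ) := by
      rw [← zpow_natCast]
      congr 1
      all_goals (push_cast; ring)
    have z3 : q ^ (2 * ((m : ℤ) + 2) - 1) = q ^ (2 * m + 3 : ℕ) := by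
      rw [← zpow_natCast]
      congr 1
      all_goals (push_cast; ring)
    have z4 : q ^ ((m : ℤ) + 2 - 1) = q ^ (m + 1 : ℕ) := by
      rw [← zpow_natCast]
      congr 1
      all_goals (push_cast; ring)
    have z5 : q ^ ((m : ℤ) + 2 - 2) = q ^ (m : ℕ) := by
      rw [← zpow_natCast]
      congr 1
      all_goals (push_cast; ring)
    rw [z1, z2, z3, z4, z5]
    -- rewrite the G's
    have g0 : G ((m : ℤ) + 2) = S q a b c d (capG ((m + 2 : ℕ) : ℤ)) := by
      rw [show ((m : ℤ) + 2) = ((m + 2 : ℕ) : ℤ) by push_cast; ring, hlink (m + 2)]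
    have g1 : G ((m : ℤ) + 2 - 1) =
        (1 - b * q ^ (m + 2 : ℕ)) * S q a b c d (capB ((m + 2 : ℕ) : ℤ)) := by
      rw [show ((m : ℤ) + 2 - 1) = ((m + 2 : ℕ) : ℤ) - 1 by push_cast; ring, hSB (m + 2)]
    have g2 : G ((m : ℤ) + 2 - 2) =
        (1 - b * q ^ (m + 1 : ℕ)) * S q a b c d (capB ((m + 1 : ℕ) : ℤ)) := by
      rw [show ((m : ℤ) + 2 - 2) = ((m + 1 : ℕ) : ℤ) - 1 by push_cast; ring, hSB (m + 1)]
    have g3 : G ((m : ℤ) + 2 - 3) =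
        (1 - b * q ^ (m : ℕ)) * S q a b c d (capB ((m : ℕ) : ℤ)) := by
      rw [show ((m : ℤ) + 2 - 3) = ((m : ℕ) : ℤ) - 1 by push_cast; ring, hSB m]
    rw [g0, g1, g2, g3]
    have hbm : (1 : ℂ) - b * q ^ (m : ℕ) ≠ 0 := by
      cases m with
      | zero => simpa using hb0
      | succ j => exact hbne (j + 1) (by omega)
    rw [hcancel _ _ _ (hbne (m + 2) (by omega)), hcancel _ _ _ (hbne (m + 1) (by omega)),
      hcancel _ _ _ hbm]
    linear_combination (1 - c*q^(m+2)) * E1a + (1 - c*q^(m+2)) * E2a +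
      d * q^(m+2) * E1b + d * q^(m+2) * E2b +
      (c + d) * q^(m+2) * E3a - (c + d) * q^(m+2) * E1b -
      E4a - d * q^(m+2) * E4b
end
end

section
/- Let G^C_{k_d}(q;a,c,d) satisfy G^C_{k_d} = (1+cq^k)G^C_{(k-1)_d} + (aq^k+dq^k+adq^{2k})G^C_{(k-2)_d} + adq^{2k-1}(1-cq^{k-1})G^C_{(k-3)_d} for k ≥ 1 with G^C_{0_d}=G^C_{-1_d}=1, G^C_{-2_d}=0, and let H_k(q;a,b,c,d) satisfy (1-cq^k)(1-bq^{k+1})H_k = (1-bcq^{2k})H_{k-1} + (aq^k+dq^k+adq^{2k})H_{k-2} + adq^{2k-1}H_{k-3} for k ≥ 0 with H_{-1}=1, H_{-2}=0, H_{-3}=(b-1)cq/(ad). Then for all k ≥ 0, G^C_{k_d}(q;a,c,d)/(cq;q)_{k+1} = H_k(q;a,c,c,d). -/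
noncomputable section

/-- Lemma 2.2 of the paper: if `G^C_{k_d}` satisfies the Capparelli recurrence
`G_k = (1+cq^k)G_{k-1} + (aq^k+dq^k+adq^{2k})G_{k-2} + adq^{2k-1}(1-cq^{k-1})G_{k-3}`
for `k ≥ 1` with `G_0 = G_{-1} = 1`, `G_{-2} = 0`, and `H_k = H_k(q;a,c,c,d)` satisfies
`(1-cq^k)(1-cq^{k+1})H_k = (1-c²q^{2k})H_{k-1} + (aq^k+dq^k+adq^{2k})H_{k-2}
  + adq^{2k-1}H_{k-3}` for `k ≥ 0` with `H_{-1} = 1`, `H_{-2} = 0`,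
`H_{-3} = (c-1)cq/(ad)`, then for all `k ≥ 0`,
`G^C_{k_d} / (cq;q)_{k+1} = H_k`. -/
theorem capparelli_H_lemma (q a c d : ℂ) (hq : q ≠ 0) (ha : a ≠ 0) (hd : d ≠ 0)
    (hcq : ∀ i : ℕ, 1 - c * q ^ i ≠ 0)
    (G : ℤ → ℂ)
    (hGrec : ∀ k : ℤ, 1 ≤ k →
      G k = (1 + c * q ^ k) * G (k - 1)
        + (a * q ^ k + d * q ^ k + a * d * q ^ (2 * k)) * G (k - 2)
        + a * d * q ^ (2 * k - 1) * (1 - c * q ^ (k - 1)) * G (k - 3))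
    (hG0 : G 0 = 1) (hGm1 : G (-1) = 1) (hGm2 : G (-2) = 0)
    (H : ℤ → ℂ)
    (hHrec : ∀ k : ℤ, 0 ≤ k →
      (1 - c * q ^ k) * (1 - c * q ^ (k + 1)) * H k =
        (1 - c * c * q ^ (2 * k)) * H (k - 1) +
        (a * q ^ k + d * q ^ k + a * d * q ^ (2 * k)) * H (k - 2) +
        a * d * q ^ (2 * k - 1) * H (k - 3))
    (hHm1 : H (-1) = 1) (hHm2 : H (-2) = 0) (hHm3 : H (-3) = (c - 1) * c * q / (a * d)) :
    ∀ k : ℕ, G k / qPoch (c * q) q (k + 1) = H k := by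
  have hP : ∀ n : ℕ, qPoch (c * q) q n ≠ 0 := by
    intro n
    unfold qPoch
    rw [Finset.prod_ne_zero_iff]
    intro i _ h
    exact hcq (i + 1) (by rw [pow_succ']; linear_combination h)
  have hq1 : qPoch (c*q) q 1 = 1 - c*q := by simp [qPoch]
  have hq2 : qPoch (c*q) q 2 = (1 - c*q) * (1 - c*q*q) := by
    simp [qPoch, Finset.prod_range_succ]
  have hq3 : qPoch (c*q) q 3 = (1 - c*q) * (1 - c*q*q) * (1 - c*q*q^2) := by
    simp [qPoch, Finset.prod_range_succ]
  have key : ∀ k : ℕ, G k = qPoch (c * q) q (k + 1) * H k := by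
    intro k
    induction k using Nat.strong_induction_on with
    | _ k ih =>
      match k, ih with
      | 0, _ =>
        have e2 := hHrec 0 le_rfl
        norm_num [hHm1, hHm2, hHm3] at e2
        field_simp at e2
        have h0 : (1:ℂ) - c ≠ 0 := by simpa using hcq 0
        have key0 : (1 - c) * ((1 - c * q) * H 0) = (1 - c) * 1 := by
          have hqad : q * (a * d) ≠ 0 := by simp [hq, ha, hd]
          apply mul_right_cancel₀ hqad
          linear_combination (q * (a * d)) * e2
        have key0' := mul_left_cancel₀ h0 key0
        norm_num [hG0, hq1]
        linear_combination -key0'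
      | 1, ih =>
        have ih0 := ih 0 (by norm_num)
        norm_num [hG0, hq1] at ih0
        have e1 := hGrec 1 le_rfl
        have e2 := hHrec 1 (by norm_num)
        norm_num [hGm1, hGm2, hG0, hHm1, hHm2] at e1 e2
        norm_num [hq2, e1]
        linear_combination -e2 + (1 + c*q) * ih0
      | 2, ih =>
        have ih0 := ih 0 (by norm_num)
        have ih1 := ih 1 (by norm_num)
        norm_num [hG0, hq1] at ih0
        norm_num [hq2] at ih1
        have e1 := hGrec 2 (by norm_num)
        have e2 := hHrec 2 (by norm_num)
        norm_num [hGm1, hG0, hHm1] at e1 e2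
        norm_num [hq3, e1]
        linear_combination (-(1 - c*q)) * e2 + (1 + c*q^2) * ih1
          + (a*q^2 + d*q^2 + a*d*q^4) * ih0
      | (n+3), ih =>
        have ih0 := ih n (by omega)
        have ih1 := ih (n+1) (by omega)
        have ih2 := ih (n+2) (by omega)
        have e1 := hGrec ((n:ℤ)+3) (by omega)
        have e2 := hHrec ((n:ℤ)+3) (by omega)
        simp only [show ((n:ℤ)+3) = ((n+3:ℕ):ℤ) by push_cast; ring,
          show ((n+3:ℕ):ℤ)-1 = ((n+2:ℕ):ℤ) by push_cast; ring,
          show ((n+3:ℕ):ℤ)-2 = ((n+1:ℕ):ℤ) by push_cast; ring,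
          show ((n+3:ℕ):ℤ)-3 = ((n:ℕ):ℤ) by push_cast; ring,
          show ((n+3:ℕ):ℤ)+1 = ((n+4:ℕ):ℤ) by push_cast; ring,
          show (2:ℤ)*((n+3:ℕ):ℤ) = ((2*n+6:ℕ):ℤ) by push_cast; ring,
          show ((2*n+6:ℕ):ℤ)-1 = ((2*n+5:ℕ):ℤ) by push_cast; ring,
          zpow_natCast] at e1 e2
        have hq4' : qPoch (c*q) q (n+3+1) = qPoch (c*q) q (n+1)
            * (1 - c*q*q^(n+1)) * (1 - c*q*q^(n+2)) * (1 - c*q*q^(n+3)) := by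
          unfold qPoch
          rw [Finset.prod_range_succ, Finset.prod_range_succ, Finset.prod_range_succ]
        have hq3' : qPoch (c*q) q (n+2+1) = qPoch (c*q) q (n+1)
            * (1 - c*q*q^(n+1)) * (1 - c*q*q^(n+2)) := by
          unfold qPoch
          rw [Finset.prod_range_succ, Finset.prod_range_succ]
        have hq2' : qPoch (c*q) q (n+1+1) = qPoch (c*q) q (n+1)
            * (1 - c*q*q^(n+1)) := by
          unfold qPoch
          rw [Finset.prod_range_succ]
        rw [hq2'] at ih1
        rw [hq3'] at ih2
        rw [hq4', e1]
        linear_combination (-(qPoch (c*q) q (n+1) * (1 - c*q*q^(n+1)))) * e2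
          + (1 + c*q^(n+3)) * ih2
          + (a*q^(n+3) + d*q^(n+3) + a*d*q^(2*n+6)) * ih1
          + a*d*q^(2*n+5) * (1 - c*q^(n+2)) * ih0
  intro k
  rw [key k]
  exact mul_div_cancel_left₀ (H k) (hP (k+1))
end
end

section
/- With G^P_{k_d}(q;a,b,c,d) defined by the recurrence (1-cq^k)G^P_{k_d} = ((1-bcq^{2k})/(1-bq^k))G^P_{(k-1)_d} + ((aq^k+dq^k+adq^{2k})/(1-bq^{k-1}))G^P_{(k-2)_d} + (adq^{2k-1}/(1-bq^{k-2}))G^P_{(k-3)_d} for k ≥ 2, initial values G^P_{-1_d}=1-b, G^P_{0_d}=1, G^P_{1_d}= bq/(1-bq) + (1+aq)(1+dq)/(1-cq), and with H_k(q;a,b,c,d) as defined by its recurrence and initial conditions H_{-1}=1, H_{-2}=0, H_{-3}=(b-1)cq/(ad), we have for all k ≥ 0: G^P_{k_d}(q;a,b,c,d)/(1 - b q^{k+1}) = H_k(q;a,b,c,d). -/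
noncomputable section

/-- Lemma 2.4 of the paper: if `G^P_{k_d}` satisfies the Primc recurrence
`(1-cq^k)G_k = ((1-bcq^{2k})/(1-bq^k))G_{k-1} + ((aq^k+dq^k+adq^{2k})/(1-bq^{k-1}))G_{k-2}
  + (adq^{2k-1}/(1-bq^{k-2}))G_{k-3}` for `k ≥ 2`, with `G_{-1} = 1-b`, `G_0 = 1`,
`G_1 = bq/(1-bq) + (1+aq)(1+dq)/(1-cq)`, and `H_k` satisfies
`(1-cq^k)(1-bq^{k+1})H_k = (1-bcq^{2k})H_{k-1} + (aq^k+dq^k+adq^{2k})H_{k-2}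
  + adq^{2k-1}H_{k-3}` for `k ≥ 0` with `H_{-1} = 1`, `H_{-2} = 0`, `H_{-3} = (b-1)cq/(ad)`,
then for all `k ≥ 0`, `G^P_{k_d} / (1 - bq^{k+1}) = H_k`. -/
theorem primc_H_lemma (q a b c d : ℂ) (hq : q ≠ 0) (ha : a ≠ 0) (hd : d ≠ 0)
    (hb : ∀ i : ℕ, 1 - b * q ^ i ≠ 0) (hc : ∀ i : ℕ, 1 - c * q ^ i ≠ 0)
    (G : ℤ → ℂ)
    (hGrec : ∀ k : ℤ, 2 ≤ k →
      (1 - c * q ^ k) * G k =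
        (1 - b * c * q ^ (2 * k)) / (1 - b * q ^ k) * G (k - 1) +
        (a * q ^ k + d * q ^ k + a * d * q ^ (2 * k)) / (1 - b * q ^ (k - 1)) * G (k - 2) +
        a * d * q ^ (2 * k - 1) / (1 - b * q ^ (k - 2)) * G (k - 3))
    (hGm1 : G (-1) = 1 - b) (hG0 : G 0 = 1)
    (hG1 : G 1 = b * q / (1 - b * q) + (1 + a * q) * (1 + d * q) / (1 - c * q))
    (H : ℤ → ℂ)
    (hHrec : ∀ k : ℤ, 0 ≤ k →
      (1 - c * q ^ k) * (1 - b * q ^ (k + 1)) * H k =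
        (1 - b * c * q ^ (2 * k)) * H (k - 1) +
        (a * q ^ k + d * q ^ k + a * d * q ^ (2 * k)) * H (k - 2) +
        a * d * q ^ (2 * k - 1) * H (k - 3))
    (hHm1 : H (-1) = 1) (hHm2 : H (-2) = 0) (hHm3 : H (-3) = (b - 1) * c * q / (a * d)) :
    ∀ k : ℕ, G k / (1 - b * q ^ (k + 1)) = H k := by

  have hb' : ∀ k : ℤ, 0 ≤ k → 1 - b * q ^ k ≠ 0 := by
    intro k hk
    have := hb k.toNat
    rwa [← zpow_natCast, Int.toNat_of_nonneg hk] at this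
  have hc' : ∀ k : ℤ, 0 ≤ k → 1 - c * q ^ k ≠ 0 := by
    intro k hk
    have := hc k.toNat
    rwa [← zpow_natCast, Int.toNat_of_nonneg hk] at this
  have key : ∀ n : ℕ, G ((n : ℤ) - 1) = (1 - b * q ^ (n : ℤ)) * H ((n : ℤ) - 1) := by
    intro n
    induction n using Nat.strong_induction_on with
    | _ n ih =>
      match n with
      | 0 =>
        norm_num [hGm1, hHm1]
      | 1 =>
        have h0 := hHrec 0 le_rfl
        have hc0 : (1 : ℂ) - c ≠ 0 := by simpa using hc 0
        have hbq : (1 : ℂ) - b * q ≠ 0 := by simpa using hb 1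
        have hqad : q * (a * d) ≠ 0 := by
          exact mul_ne_zero hq (mul_ne_zero ha hd)
        norm_num [hHm1, hHm2, hHm3, zpow_neg] at h0
        field_simp at h0
        have key1 : ((1 - c) * (q * (a * d))) * ((1 - b * q) * H 0) =
            ((1 - c) * (q * (a * d))) * 1 := by linear_combination (q * (a * d)) * h0
        have h2 := mul_left_cancel₀ (mul_ne_zero hc0 hqad) key1
        norm_num [hG0]
        simpa using h2.symm
      | 2 =>
        have h1 := hHrec 1 (by norm_num)
        have hbq : (1 : ℂ) - b * q ≠ 0 := by simpa using hb 1
        have hbq2 : (1 : ℂ) - b * q ^ 2 ≠ 0 := by simpa using hb 2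
        have hcq : (1 : ℂ) - c * q ≠ 0 := by simpa using hc 1
        have h0 : (1 : ℂ) = (1 - b * q) * H 0 := by
          have := ih 1 (by norm_num)
          norm_num [hG0] at this
          simpa using this
        have hH0 : H 0 = 1 / (1 - b * q) := by
          field_simp
          ring
          linear_combination -h0
        norm_num [hHm1, hHm2] at h1
        rw [hH0] at h1
        have e : H 1 = ((1 - b * c * q ^ 2) / (1 - b * q) + (a * q + d * q + a * d * q ^ 2)) /
            ((1 - c * q) * (1 - b * q ^ 2)) := by
          rw [eq_div_iff (mul_ne_zero hcq hbq2)]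
          linear_combination h1
        push_cast
        norm_num
        rw [hG1, e]
        field_simp
        linear_combination (-(b * q)) * mul_inv_cancel₀ (show (1:ℂ) - q * c ≠ 0 by rwa [mul_comm] at hcq)
      | (m + 3) =>
        have hk2 : (2 : ℤ) ≤ (m : ℤ) + 2 := by omega
        have hG := hGrec ((m : ℤ) + 2) hk2
        have hH := hHrec ((m : ℤ) + 2) (by omega)
        have i1 : G ((m : ℤ) + 1) = (1 - b * q ^ ((m : ℤ) + 2)) * H ((m : ℤ) + 1) := by
          have := ih (m + 2) (by omega); push_cast at this
          rwa [show (m : ℤ) + 2 - 1 = (m : ℤ) + 1 by ring] at this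
        have i2 : G (m : ℤ) = (1 - b * q ^ ((m : ℤ) + 1)) * H (m : ℤ) := by
          have := ih (m + 1) (by omega); push_cast at this
          rwa [show (m : ℤ) + 1 - 1 = (m : ℤ) by ring] at this
        have i3 : G ((m : ℤ) - 1) = (1 - b * q ^ (m : ℤ)) * H ((m : ℤ) - 1) := by
          exact ih m (by omega)
        have e1 : ((m : ℤ) + 2) - 1 = (m : ℤ) + 1 := by ring
        have e2 : ((m : ℤ) + 2) - 2 = (m : ℤ) := by ring
        have e3 : ((m : ℤ) + 2) - 3 = (m : ℤ) - 1 := by ring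
        rw [e1, e2, e3] at hG hH
        rw [i1, i2, i3] at hG
        have hbk2 : 1 - b * q ^ ((m : ℤ) + 2) ≠ 0 := hb' _ (by omega)
        have hbk1 : 1 - b * q ^ ((m : ℤ) + 1) ≠ 0 := hb' _ (by omega)
        have hbk0 : 1 - b * q ^ (m : ℤ) ≠ 0 := hb' _ (by omega)
        have hck : 1 - c * q ^ ((m : ℤ) + 2) ≠ 0 := hc' _ (by omega)
        have cancel : ∀ A D x : ℂ, D ≠ 0 → A / D * (D * x) = A * x := by
          intro A D x hD
          field_simp
        rw [cancel _ _ _ hbk2, cancel _ _ _ hbk1, cancel _ _ _ hbk0] at hG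
        have final : G ((m : ℤ) + 2) = (1 - b * q ^ (((m : ℤ) + 2) + 1)) * H ((m : ℤ) + 2) :=
          mul_left_cancel₀ hck (by rw [hG, ← mul_assoc]; exact hH.symm)
        push_cast
        rw [show (m : ℤ) + 3 - 1 = (m : ℤ) + 2 by ring,
          show (m : ℤ) + 3 = ((m : ℤ) + 2) + 1 by ring]
        exact final
  intro k
  have h := key (k + 1)
  have e : ((k : ℤ) + 1) - 1 = (k : ℤ) := by ring
  push_cast at h
  rw [e] at h
  rw [h]
  have hbk : 1 - b * q ^ (k + 1) ≠ 0 := hb (k + 1)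
  rw [show ((k : ℤ) + 1) = ((k + 1 : ℕ) : ℤ) by push_cast; ring, zpow_natCast]
  field_simp
end
end

section
/- Define u_n by u_0 = 1, u_1 = q(b-1)/((1-bq)(1-q)), and for n ≥ 2: u_n = ((1+aq^{n-1})(1+dq^{n-1}))/((1-bq^n)(1-cq^{n-1})) · u_{n-2} + (-1)^n q^n (1-b)/((1-bq^n)(q;q)_n). Then for all n ≥ 0: u_{2n} = (1-b) ∑_{ℓ=0}^{n} [(-aq^{2ℓ+1};q²)_{n-ℓ} (-dq^{2ℓ+1};q²)_{n-ℓ}]/[(bq^{2ℓ};q²)_{n-ℓ+1} (cq^{2ℓ+1};q²)_{n-ℓ}] · q^{2ℓ}/(q;q)_{2ℓ}, and u_{2n+1} = (b-1) ∑_{ℓ=0}^{n} [(-aq^{2ℓ+2};q²)_{n-ℓ} (-dq^{2ℓ+2};q²)_{n-ℓ}]/[(bq^{2ℓ+1};q²)_{n-ℓ+1} (cq^{2ℓ+2};q²)_{n-ℓ}] · q^{2ℓ+1}/(q;q)_{2ℓ+1}. -/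
noncomputable section

lemma qPoch_zero (x q : ℂ) : qPoch x q 0 = 1 := Finset.prod_range_zero _

lemma qPoch_succ (x q : ℂ) (n : ℕ) :
    qPoch x q (n + 1) = qPoch x q n * (1 - x * q ^ n) := Finset.prod_range_succ _ _

lemma qPoch_one (x q : ℂ) : qPoch x q 1 = 1 - x := by
  simp [qPoch]

lemma qPoch_ne_zero {x q : ℂ} {n : ℕ} (h : ∀ i : ℕ, 1 - x * q ^ i ≠ 0) :
    qPoch x q n ≠ 0 := Finset.prod_ne_zero_iff.mpr fun i _ => h i

lemma qPoch_b_ne (q b : ℂ) (hb : ∀ n : ℕ, 1 - b * q ^ n ≠ 0) (j k : ℕ) :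
    qPoch (b * q ^ j) (q ^ 2) k ≠ 0 :=
  qPoch_ne_zero fun i => by
    have h := hb (j + 2 * i)
    rwa [show b * q ^ (j + 2 * i) = b * q ^ j * (q ^ 2) ^ i from by ring] at h

lemma qPoch_c_ne (q c : ℂ) (hc : ∀ n : ℕ, 1 - c * q ^ (n + 1) ≠ 0) (j k : ℕ) :
    qPoch (c * q ^ (j + 1)) (q ^ 2) k ≠ 0 :=
  qPoch_ne_zero fun i => by
    have h := hc (j + 2 * i)
    rwa [show c * q ^ (j + 2 * i + 1) = c * q ^ (j + 1) * (q ^ 2) ^ i from by ring] at h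

lemma qPoch_q_ne (q : ℂ) (hq : ∀ n : ℕ, 1 - q ^ (n + 1) ≠ 0) (k : ℕ) :
    qPoch q q k ≠ 0 :=
  qPoch_ne_zero fun i => by
    have h := hq i
    rwa [show q ^ (i + 1) = q * q ^ i from by ring] at h

lemma term_step (q a b c d : ℂ) (e k : ℕ)
    (hB1 : qPoch (b * q ^ e) (q ^ 2) (k + 1) ≠ 0)
    (hB2 : 1 - b * q ^ (e + 2 + 2 * k) ≠ 0)
    (hC1 : qPoch (c * q ^ (e + 1)) (q ^ 2) k ≠ 0)
    (hC2 : 1 - c * q ^ (e + 1 + 2 * k) ≠ 0)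
    (hQ : qPoch q q e ≠ 0) :
    qPoch (-(a * q ^ (e + 1))) (q ^ 2) (k + 1) *
      qPoch (-(d * q ^ (e + 1))) (q ^ 2) (k + 1) /
      (qPoch (b * q ^ e) (q ^ 2) (k + 1 + 1) *
        qPoch (c * q ^ (e + 1)) (q ^ 2) (k + 1)) *
      (q ^ e / qPoch q q e)
    = (1 + a * q ^ (e + 1 + 2 * k)) * (1 + d * q ^ (e + 1 + 2 * k)) /
        ((1 - b * q ^ (e + 2 + 2 * k)) * (1 - c * q ^ (e + 1 + 2 * k))) *
      (qPoch (-(a * q ^ (e + 1))) (q ^ 2) k *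
        qPoch (-(d * q ^ (e + 1))) (q ^ 2) k /
        (qPoch (b * q ^ e) (q ^ 2) (k + 1) *
          qPoch (c * q ^ (e + 1)) (q ^ 2) k) *
        (q ^ e / qPoch q q e)) := by
  rw [qPoch_succ (-(a * q ^ (e + 1))), qPoch_succ (-(d * q ^ (e + 1))),
      qPoch_succ (b * q ^ e) (q ^ 2) (k + 1), qPoch_succ (c * q ^ (e + 1))]
  rw [show b * q ^ e * (q ^ 2) ^ (k + 1) = b * q ^ (e + 2 + 2 * k) from by ring,
      show c * q ^ (e + 1) * (q ^ 2) ^ k = c * q ^ (e + 1 + 2 * k) from by ring,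
      show (-(a * q ^ (e + 1))) * (q ^ 2) ^ k = -(a * q ^ (e + 1 + 2 * k)) from by ring,
      show (-(d * q ^ (e + 1))) * (q ^ 2) ^ k = -(d * q ^ (e + 1 + 2 * k)) from by ring]
  field_simp
  ring

lemma even_step (q a b c d : ℂ)
    (hb : ∀ n : ℕ, 1 - b * q ^ n ≠ 0) (hc : ∀ n : ℕ, 1 - c * q ^ (n + 1) ≠ 0)
    (hq : ∀ n : ℕ, 1 - q ^ (n + 1) ≠ 0) (n : ℕ) :
    ∑ m ∈ Finset.range (n + 1 + 1),
        qPoch (-(a * q ^ (2 * m + 1))) (q ^ 2) (n + 1 - m) *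
          qPoch (-(d * q ^ (2 * m + 1))) (q ^ 2) (n + 1 - m) /
        (qPoch (b * q ^ (2 * m)) (q ^ 2) (n + 1 - m + 1) *
          qPoch (c * q ^ (2 * m + 1))  (q ^ 2) (n + 1 - m)) *
        (q ^ (2 * m) / qPoch q q (2 * m))
    = (1 + a * q ^ (2 * n + 1)) * (1 + d * q ^ (2 * n + 1)) /
        ((1 - b * q ^ (2 * n + 2)) * (1 - c * q ^ (2 * n + 1))) *
      ∑ m ∈ Finset.range (n + 1),
        qPoch (-(a * q ^ (2 * m + 1))) (q ^ 2) (n - m) *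
          qPoch (-(d * q ^ (2 * m + 1))) (q ^ 2) (n - m) /
        (qPoch (b * q ^ (2 * m)) (q ^ 2) (n - m + 1) *
          qPoch (c * q ^ (2 * m + 1)) (q ^ 2) (n - m)) *
        (q ^ (2 * m) / qPoch q q (2 * m))
      + q ^ (2 * n + 2) / ((1 - b * q ^ (2 * n + 2)) * qPoch q q (2 * n + 2)) := by
  rw [Finset.sum_range_succ, Finset.mul_sum]
  congr 1
  · apply Finset.sum_congr rfl
    intro m hm
    have hmn : m ≤ n := by have := Finset.mem_range.mp hm; omega
    rw [show n + 1 - m = n - m + 1 by omega,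
        show 2 * n + 1 = 2 * m + 1 + 2 * (n - m) by omega,
        show 2 * n + 2 = 2 * m + 2 + 2 * (n - m) by omega]
    exact term_step q a b c d (2 * m) (n - m) (qPoch_b_ne q b hb _ _) (hb _)
      (qPoch_c_ne q c hc (2 * m) _)
      (by have h := hc (2 * m + 2 * (n - m))
          rwa [show 2 * m + 2 * (n - m) + 1 = 2 * m + 1 + 2 * (n - m) by omega] at h)
      (qPoch_q_ne q hq _)
  · rw [show n + 1 - (n + 1) = 0 by omega, show 2 * (n + 1) = 2 * n + 2 by ring]
    rw [qPoch_succ, qPoch_zero, qPoch_zero, qPoch_zero, qPoch_zero]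
    have h1 := hb (2 * n + 2)
    have h2 := qPoch_q_ne q hq (2 * n + 2)
    field_simp

lemma odd_step (q a b c d : ℂ)
    (hb : ∀ n : ℕ, 1 - b * q ^ n ≠ 0) (hc : ∀ n : ℕ, 1 - c * q ^ (n + 1) ≠ 0)
    (hq : ∀ n : ℕ, 1 - q ^ (n + 1) ≠ 0) (n : ℕ) :
    ∑ m ∈ Finset.range (n + 1 + 1),
        qPoch (-(a * q ^ (2 * m + 2))) (q ^ 2) (n + 1 - m) *
          qPoch (-(d * q ^ (2 * m + 2))) (q ^ 2) (n + 1 - m) /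
        (qPoch (b * q ^ (2 * m + 1)) (q ^ 2) (n + 1 - m + 1) *
          qPoch (c * q ^ (2 * m + 2)) (q ^ 2) (n + 1 - m)) *
        (q ^ (2 * m + 1) / qPoch q q (2 * m + 1))
    = (1 + a * q ^ (2 * n + 2)) * (1 + d * q ^ (2 * n + 2)) /
        ((1 - b * q ^ (2 * n + 3)) * (1 - c * q ^ (2 * n + 2))) *
      ∑ m ∈ Finset.range (n + 1),
        qPoch (-(a * q ^ (2 * m + 2))) (q ^ 2) (n - m) *
          qPoch (-(d * q ^ (2 * m + 2))) (q ^ 2) (n - m) /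
        (qPoch (b * q ^ (2 * m + 1)) (q ^ 2) (n - m + 1) *
          qPoch (c * q ^ (2 * m + 2)) (q ^ 2) (n - m)) *
        (q ^ (2 * m + 1) / qPoch q q (2 * m + 1))
      + q ^ (2 * n + 3) / ((1 - b * q ^ (2 * n + 3)) * qPoch q q (2 * n + 3)) := by
  rw [Finset.sum_range_succ, Finset.mul_sum]
  congr 1
  · apply Finset.sum_congr rfl
    intro m hm
    have hmn : m ≤ n := by have := Finset.mem_range.mp hm; omega
    rw [show n + 1 - m = n - m + 1 by omega,
        show 2 * m + 2 = 2 * m + 1 + 1 by omega,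
        show 2 * n + 2 = 2 * m + 1 + 1 + 2 * (n - m) by omega,
        show 2 * n + 3 = 2 * m + 1 + 2 + 2 * (n - m) by omega]
    exact term_step q a b c d (2 * m + 1) (n - m) (qPoch_b_ne q b hb _ _) (hb _)
      (qPoch_c_ne q c hc (2 * m + 1) _)
      (by have h := hc (2 * m + 1 + 2 * (n - m))
          rwa [show 2 * m + 1 + 2 * (n - m) + 1 = 2 * m + 1 + 1 + 2 * (n - m) by omega] at h)
      (qPoch_q_ne q hq _)
  · rw [show n + 1 - (n + 1) = 0 by omega, show 2 * (n + 1) + 1 = 2 * n + 3 by ring]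
    rw [qPoch_succ, qPoch_zero, qPoch_zero, qPoch_zero, qPoch_zero]
    have h1 := hb (2 * n + 3)
    have h2 := qPoch_q_ne q hq (2 * n + 3)
    field_simp

/-- Explicit solution of the recurrence \eqref{eq:u}: if `u_0 = 1`,
`u_1 = q(b-1)/((1-bq)(1-q))` and for `n ≥ 2`,
`u_n = ((1+aq^{n-1})(1+dq^{n-1}))/((1-bq^n)(1-cq^{n-1})) u_{n-2}
  + (-1)^n q^n (1-b)/((1-bq^n)(q;q)_n)`, then `u_{2n}` and `u_{2n+1}` are given by the
stated explicit sums. -/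
theorem u_explicit_formula (q a b c d : ℂ)
    (hb : ∀ n : ℕ, 1 - b * q ^ n ≠ 0) (hc : ∀ n : ℕ, 1 - c * q ^ (n + 1) ≠ 0)
    (hq : ∀ n : ℕ, 1 - q ^ (n + 1) ≠ 0)
    (u : ℕ → ℂ) (h0 : u 0 = 1) (h1 : u 1 = q * (b - 1) / ((1 - b * q) * (1 - q)))
    (hrec : ∀ n : ℕ, 2 ≤ n →
      u n = (1 + a * q ^ (n - 1)) * (1 + d * q ^ (n - 1)) /
          ((1 - b * q ^ n) * (1 - c * q ^ (n - 1))) * u (n - 2)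
        + (-1) ^ n * q ^ n * (1 - b) / ((1 - b * q ^ n) * qPoch q q n)) :
    (∀ n : ℕ, u (2 * n) = (1 - b) * ∑ m ∈ Finset.range (n + 1),
        qPoch (-(a * q ^ (2 * m + 1))) (q ^ 2) (n - m) *
          qPoch (-(d * q ^ (2 * m + 1))) (q ^ 2) (n - m) /
        (qPoch (b * q ^ (2 * m)) (q ^ 2) (n - m + 1) *
          qPoch (c * q ^ (2 * m + 1)) (q ^ 2) (n - m)) *
        (q ^ (2 * m) / qPoch q q (2 * m))) ∧
    (∀ n : ℕ, u (2 * n + 1) = (b - 1) * ∑ m ∈ Finset.range (n + 1),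
        qPoch (-(a * q ^ (2 * m + 2))) (q ^ 2) (n - m) *
          qPoch (-(d * q ^ (2 * m + 2))) (q ^ 2) (n - m) /
        (qPoch (b * q ^ (2 * m + 1)) (q ^ 2) (n - m + 1) *
          qPoch (c * q ^ (2 * m + 2)) (q ^ 2) (n - m)) *
        (q ^ (2 * m + 1) / qPoch q q (2 * m + 1))) := by
  constructor
  · intro n
    induction n with
    | zero =>
      have hb0 : (1 : ℂ) - b ≠ 0 := by simpa using hb 0
      simp [h0, qPoch_zero, qPoch_one]
      field_simp
    | succ n IH =>
      have hr := hrec (2 * n + 2) (by omega)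
      rw [show 2 * n + 2 - 1 = 2 * n + 1 by omega, show 2 * n + 2 - 2 = 2 * n by omega,
          show ((-1 : ℂ)) ^ (2 * n + 2) = 1 from Even.neg_one_pow ⟨n + 1, by ring⟩, IH] at hr
      rw [show 2 * (n + 1) = 2 * n + 2 by ring, hr, even_step q a b c d hb hc hq n]
      ring
  · intro n
    induction n with
    | zero =>
      have hbq : (1 : ℂ) - b * q ≠ 0 := by simpa using hb 1
      have hq1 : (1 : ℂ) - q ≠ 0 := by simpa using hq 0
      simp [h1, qPoch_zero, qPoch_one]
      field_simp
    | succ n IH =>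
      have hr := hrec (2 * n + 3) (by omega)
      rw [show 2 * n + 3 - 1 = 2 * n + 2 by omega, show 2 * n + 3 - 2 = 2 * n + 1 by omega,
          show ((-1 : ℂ)) ^ (2 * n + 3) = -1 from Odd.neg_one_pow ⟨n + 1, by ring⟩, IH] at hr
      rw [show 2 * (n + 1) + 1 = 2 * n + 3 by ring, hr, odd_step q a b c d hb hc hq n]
      ring
end
end

section
/- As formal power series (or for |q| < 1), lim_{k→∞} ∑_{j=0}^{⌊k/2⌋} q^{binom(2j,2)}/(q;q)_{2j} = lim_{k→∞} ∑_{j=0}^{⌊k/2⌋} q^{binom(2j+1,2)}/(q;q)_{2j+1} = (-q;q)_∞; equivalently, ∑_{j≥0} q^{j(2j-1)}/(q;q)_{2j} = ∑_{j≥0} q^{j(2j+1)}/(q;q)_{2j+1} = ∏_{k≥1}(1+q^k). -/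
noncomputable section

namespace EulerHalvesAux

open Filter Finset Topology

lemma qPoch_zero (q : ℂ) : qPoch q q 0 = 1 := by simp [qPoch]

lemma qPoch_succ (q : ℂ) (n : ℕ) :
    qPoch q q (n + 1) = qPoch q q n * (1 - q ^ (n + 1)) := by
  rw [qPoch, Finset.prod_range_succ, ← pow_succ']
  rfl

lemma norm_pow_le {q : ℂ} (hq : ‖q‖ < 1) (n : ℕ) : ‖q ^ (n + 1)‖ ≤ ‖q‖ := by
  rw [norm_pow]
  calc ‖q‖ ^ (n + 1) ≤ ‖q‖ ^ 1 := pow_le_pow_of_le_one (norm_nonneg q) hq.le (by omega)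
  _ = ‖q‖ := pow_one _

lemma one_sub_norm_le {q : ℂ} (hq : ‖q‖ < 1) (n : ℕ) :
    1 - ‖q‖ ≤ ‖1 - q ^ (n + 1)‖ := by
  calc 1 - ‖q‖ ≤ 1 - ‖q ^ (n+1)‖ := by linarith [norm_pow_le hq n]
  _ = ‖(1:ℂ)‖ - ‖q ^ (n+1)‖ := by simp
  _ ≤ ‖1 - q ^ (n + 1)‖ := norm_sub_norm_le _ _

lemma one_sub_ne_zero {q : ℂ} (hq : ‖q‖ < 1) (n : ℕ) : (1 : ℂ) - q ^ (n + 1) ≠ 0 := by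
  intro h
  have h2 := one_sub_norm_le hq n
  rw [h] at h2
  simp at h2
  linarith

lemma qPoch_ne_zero {q : ℂ} (hq : ‖q‖ < 1) (n : ℕ) : qPoch q q n ≠ 0 := by
  induction n with
  | zero => simp [qPoch_zero]
  | succ m ih => rw [qPoch_succ]; exact mul_ne_zero ih (one_sub_ne_zero hq m)

/-- The general term of Euler's series. -/
def term (q x : ℂ) (n : ℕ) : ℂ := q ^ n.choose 2 * x ^ n / qPoch q q n

lemma term_zero (q x : ℂ) : term q x 0 = 1 := by simp [term, qPoch_zero]

lemma pow_choose_succ (q : ℂ) (n : ℕ) :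
    q ^ (n + 1).choose 2 = q ^ n * q ^ n.choose 2 := by
  rw [Nat.choose_succ_succ, Nat.choose_one_right, pow_add]

lemma term_succ (q x : ℂ) {n : ℕ} (hq : ‖q‖ < 1) :
    term q x (n + 1) = (q ^ n * x / (1 - q ^ (n + 1))) * term q x n := by
  rw [term, term, qPoch_succ, pow_choose_succ, pow_succ]
  have h1 := qPoch_ne_zero hq n
  have h2 := one_sub_ne_zero hq n
  field_simp

lemma summable_norm_term {q : ℂ} (hq : ‖q‖ < 1) (x : ℂ) :
    Summable fun n => ‖term q x n‖ := by
  have h0 : Tendsto (fun n : ℕ => ‖q‖ ^ n * ‖x‖ / (1 - ‖q‖)) atTop (𝓝 0) := by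
    have := (tendsto_pow_atTop_nhds_zero_of_lt_one (norm_nonneg q) hq).mul_const ‖x‖
    simpa using this.div_const (1 - ‖q‖)
  apply summable_of_ratio_norm_eventually_le (r := 1/2) (by norm_num)
  filter_upwards [h0.eventually_le_const (by norm_num : (0:ℝ) < 1/2)] with n hn
  have hd : (0:ℝ) < 1 - ‖q‖ := by linarith
  have hd2 : (0:ℝ) < ‖1 - q ^ (n+1)‖ := lt_of_lt_of_le hd (one_sub_norm_le hq n)
  have key : ‖term q x (n+1)‖ ≤ (‖q‖ ^ n * ‖x‖ / (1 - ‖q‖)) * ‖term q x n‖ := by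
    rw [term_succ q x hq, norm_mul, norm_div, norm_mul, norm_pow]
    gcongr
    exact one_sub_norm_le hq n
  calc ‖(‖term q x (n+1)‖)‖ = ‖term q x (n+1)‖ := norm_norm _
    _ ≤ (‖q‖ ^ n * ‖x‖ / (1 - ‖q‖)) * ‖term q x n‖ := key
    _ ≤ (1/2) * ‖term q x n‖ := by
        apply mul_le_mul_of_nonneg_right hn (norm_nonneg _)
    _ = (1/2) * ‖(‖term q x n‖)‖ := by rw [norm_norm]

lemma summable_term {q : ℂ} (hq : ‖q‖ < 1) (x : ℂ) : Summable (term q x) :=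
  (summable_norm_term hq x).of_norm

/-- Key coefficient recurrence behind `S x = (1+x) S (xq)`. -/
lemma term_rec {q : ℂ} (hq : ‖q‖ < 1) (x : ℂ) (n : ℕ) :
    term q x (n + 1) = term q (x * q) (n + 1) + x * term q (x * q) n := by
  rw [term, term, term, qPoch_succ, pow_choose_succ]
  have h1 := qPoch_ne_zero hq n
  have h2 := one_sub_ne_zero hq n
  field_simp
  ring

/-- Euler's series `S(x) = ∑ q^C(n,2) x^n/(q;q)_n`. -/
def T (q x : ℂ) : ℂ := ∑' n, term q x n

lemma funEq {q : ℂ} (hq : ‖q‖ < 1) (x : ℂ) : T q x = (1 + x) * T q (x * q) := by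
  have hS := summable_term hq x
  have hSq := summable_term hq (x * q)
  have h1 : Summable fun n => term q (x * q) (n + 1) :=
    (summable_nat_add_iff 1).2 hSq
  have h2 : Summable fun n => x * term q (x * q) n := hSq.mul_left x
  have e1 : T q x = 1 + ∑' n, term q x (n + 1) := by
    rw [T, Summable.tsum_eq_zero_add hS, term_zero]
  have e2 : ∑' n, term q x (n + 1)
      = (∑' n, term q (x * q) (n + 1)) + ∑' n, x * term q (x * q) n := by
    rw [← Summable.tsum_add h1 h2]
    exact tsum_congr fun n => term_rec hq x n
  have e3 : ∑' n, term q (x * q) (n + 1) = T q (x * q) - 1 := by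
    rw [T, Summable.tsum_eq_zero_add hSq, term_zero]; ring
  have e4 : ∑' n, x * term q (x * q) n = x * T q (x * q) := tsum_mul_left
  rw [e1, e2, e3, e4]; ring

set_option maxHeartbeats 1000000 in
lemma T_tendsto {q : ℂ} (hq : ‖q‖ < 1) (x : ℂ) :
    Tendsto (fun N => T q (x * q ^ N)) atTop (𝓝 1) := by
  set C : ℝ := ∑' n, ‖term q 1 (n + 1)‖ with hC
  have hCsum : Summable fun n => ‖term q 1 (n + 1)‖ :=
    (summable_nat_add_iff 1).2 (summable_norm_term hq 1)
  have hC0 : 0 ≤ C := tsum_nonneg fun n => norm_nonneg _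
  have bound : ∀ y : ℂ, ‖y‖ ≤ 1 → ‖T q y - 1‖ ≤ ‖y‖ * C := by
    intro y hy
    have hS := summable_term hq y
    have hN : Summable fun n => ‖term q y (n + 1)‖ :=
      (summable_nat_add_iff 1).2 (summable_norm_term hq y)
    have e1 : T q y - 1 = ∑' n, term q y (n + 1) := by
      rw [T, Summable.tsum_eq_zero_add hS, term_zero]; ring
    rw [e1]
    calc ‖∑' n, term q y (n + 1)‖ ≤ ∑' n, ‖term q y (n + 1)‖ :=
          norm_tsum_le_tsum_norm hN
      _ ≤ ∑' n, ‖y‖ * ‖term q 1 (n + 1)‖ := by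
          apply Summable.tsum_le_tsum _ hN (hCsum.mul_left ‖y‖)
          intro n
          have : term q y (n + 1) = y ^ (n + 1) * term q 1 (n + 1) := by
            simp only [term, one_pow]
            ring
          rw [this, norm_mul, norm_pow]
          have h1 : ‖y‖ ^ (n + 1) ≤ ‖y‖ := by
            calc ‖y‖ ^ (n+1) ≤ ‖y‖ ^ 1 := pow_le_pow_of_le_one (norm_nonneg y) hy (by omega)
            _ = ‖y‖ := pow_one _
          exact mul_le_mul_of_nonneg_right h1 (norm_nonneg _)
      _ = ‖y‖ * C := tsum_mul_left
  have hpow : Tendsto (fun N : ℕ => ‖x‖ * ‖q‖ ^ N) atTop (𝓝 0) := by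
    simpa using (tendsto_pow_atTop_nhds_zero_of_lt_one (norm_nonneg q) hq).const_mul ‖x‖
  rw [tendsto_iff_norm_sub_tendsto_zero]
  apply squeeze_zero' (Eventually.of_forall fun N => norm_nonneg _)
    (g := fun N => ‖x‖ * ‖q‖ ^ N * C)
  · filter_upwards [hpow.eventually_le_const (by norm_num : (0:ℝ) < 1)] with N hN
    have := bound (x * q ^ N) (by rwa [norm_mul, norm_pow])
    simpa [norm_mul, norm_pow] using this
  · simpa using hpow.mul_const C

lemma one_add_ne_zero {q : ℂ} (hq : ‖q‖ < 1) (k : ℕ) : 1 + q * q ^ k ≠ 0 := by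
  intro h
  have h1 : q * q ^ k = -1 := by linear_combination h
  have h2 : ‖q * q ^ k‖ ≤ ‖q‖ := by
    rw [show q * q ^ k = q ^ (k + 1) by rw [pow_succ']]
    exact norm_pow_le hq k
  rw [h1] at h2
  simp at h2
  linarith

lemma hasProd_one_add {q : ℂ} (hq : ‖q‖ < 1) :
    HasProd (fun k => 1 + q * q ^ k) (T q q) := by
  -- Summability of logs
  have hev : ∀ᶠ k in atTop, ‖q * q ^ k‖ ≤ 1 / 2 := by
    have h0 : Tendsto (fun k : ℕ => ‖q‖ * ‖q‖ ^ k) atTop (𝓝 0) := by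
      simpa using (tendsto_pow_atTop_nhds_zero_of_lt_one (norm_nonneg q) hq).const_mul ‖q‖
    filter_upwards [h0.eventually_le_const (by norm_num : (0:ℝ) < 1/2)] with k hk
    rwa [norm_mul, norm_pow]
  have hg : Summable fun k => Complex.log (1 + q * q ^ k) := by
    apply Summable.of_norm_bounded_eventually_nat
      (g := fun k => (3 / 2 * ‖q‖) * ‖q‖ ^ k)
      (((summable_geometric_of_lt_one (norm_nonneg q) hq).mul_left _))
    filter_upwards [hev] with k hk
    calc ‖Complex.log (1 + q * q ^ k)‖ ≤ 3 / 2 * ‖q * q ^ k‖ :=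
          Complex.norm_log_one_add_half_le_self hk
      _ = 3 / 2 * ‖q‖ * ‖q‖ ^ k := by rw [norm_mul, norm_pow]; ring
  obtain ⟨L, hL⟩ := hg
  have hprod : HasProd (fun k => 1 + q * q ^ k) (Complex.exp L) := by
    have := hL.cexp
    convert this using 1
    funext k
    exact (Complex.exp_log (one_add_ne_zero hq k)).symm
  -- Partial products times tail: constant sequence
  have hconst : ∀ N, T q q = (∏ k ∈ Finset.range N, (1 + q * q ^ k)) * T q (q * q ^ N) := by
    intro N
    induction N with
    | zero => simp
    | succ m ih =>
      rw [Finset.prod_range_succ, ih, funEq hq (q * q ^ m)]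
      rw [show q * q ^ m * q = q * q ^ (m + 1) by ring]
      ring
  have hlim : Tendsto (fun N => (∏ k ∈ Finset.range N, (1 + q * q ^ k)) * T q (q * q ^ N))
      atTop (𝓝 (Complex.exp L * 1)) :=
    (hprod.tendsto_prod_nat).mul (T_tendsto hq q)
  have : T q q = Complex.exp L * 1 := by
    apply tendsto_nhds_unique _ hlim
    simp only [← hconst]
    exact tendsto_const_nhds
  rw [this, mul_one]
  exact hprod

lemma T_eq_tprod {q : ℂ} (hq : ‖q‖ < 1) :
    T q q = ∏' k, (1 + q ^ (k + 1)) := by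
  have h := (hasProd_one_add hq).tprod_eq
  rw [← h]
  exact tprod_congr fun k => by rw [pow_succ']

lemma choose_even (j : ℕ) : (2 * j).choose 2 = j * (2 * j - 1) := by
  rw [Nat.choose_two_right]
  cases j with
  | zero => rfl
  | succ m =>
    rw [show 2 * (m + 1) - 1 = 2 * m + 1 from by omega,
      show 2 * (m + 1) * (2 * m + 1) = 2 * ((m + 1) * (2 * m + 1)) from by ring,
      Nat.mul_div_cancel_left _ (by norm_num)]

lemma choose_odd (j : ℕ) : (2 * j + 1).choose 2 = j * (2 * j + 1) := by
  rw [Nat.choose_two_right,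
    show 2 * j + 1 - 1 = 2 * j from by omega,
    show (2 * j + 1) * (2 * j) = 2 * (j * (2 * j + 1)) from by ring,
    Nat.mul_div_cancel_left _ (by norm_num)]

lemma halves {q : ℂ} (hq : ‖q‖ < 1) :
    (∑' j : ℕ, term q 1 (2 * j)) = T q q ∧ (∑' j : ℕ, term q 1 (2 * j + 1)) = T q q := by
  have hs1 := summable_term hq 1
  have hinj2 : Function.Injective (fun j : ℕ => 2 * j) := fun a b h => by simp only [] at h; omega
  have hinj2' : Function.Injective (fun j : ℕ => 2 * j + 1) := fun a b h => by simp only [] at h; omega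
  have hE : Summable fun j => term q 1 (2 * j) := hs1.comp_injective hinj2
  have hO : Summable fun j => term q 1 (2 * j + 1) := hs1.comp_injective hinj2'
  set E := ∑' j, term q 1 (2 * j) with hEdef
  set O := ∑' j, term q 1 (2 * j + 1) with hOdef
  have hsumEO : HasSum (term q 1) (E + O) := hE.hasSum.even_add_odd hO.hasSum
  have h1 : E + O = T q 1 := hsumEO.tsum_eq.symm
  have eEven : (fun j => term q (-1 : ℂ) (2 * j)) = fun j => term q 1 (2 * j) :=
    funext fun j => by
      simp only [term, one_pow, Even.neg_one_pow (even_two_mul j)]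
  have eOdd : (fun j => term q (-1 : ℂ) (2 * j + 1)) = fun j => -term q 1 (2 * j + 1) :=
    funext fun j => by
      simp only [term, one_pow, Odd.neg_one_pow (odd_two_mul_add_one j)]
      ring
  have hEneg : HasSum (fun j => term q (-1 : ℂ) (2 * j)) E := by
    rw [eEven]; exact hE.hasSum
  have hOneg : HasSum (fun j => term q (-1 : ℂ) (2 * j + 1)) (-O) := by
    rw [eOdd]; exact hO.hasSum.neg
  have hsumalt : HasSum (term q (-1 : ℂ)) (E + -O) := hEneg.even_add_odd hOneg
  have h2 : E + -O = T q (-1) := hsumalt.tsum_eq.symm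
  have hTneg : T q (-1) = 0 := by rw [funEq hq (-1)]; ring
  have hEeqO : E = O := by
    rw [hTneg] at h2
    linear_combination h2
  have hT1' : T q 1 = 2 * T q q := by rw [funEq hq 1, one_mul]; ring
  rw [hT1'] at h1
  constructor
  · rw [← hEeqO] at h1
    linear_combination h1 / 2
  · rw [hEeqO] at h1
    linear_combination h1 / 2

end EulerHalvesAux

/-- The even- and odd-index halves of Euler's identity at `x = q`:
`∑_{j≥0} q^{j(2j-1)}/(q;q)_{2j} = ∑_{j≥0} q^{j(2j+1)}/(q;q)_{2j+1} = ∏_{k≥1}(1+q^k)`. -/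
theorem euler_identity_halves (q : ℂ) (hq : ‖q‖ < 1) :
    (∑' j : ℕ, q ^ (j * (2 * j - 1)) / qPoch q q (2 * j) = ∏' k : ℕ, (1 + q ^ (k + 1))) ∧
    (∑' j : ℕ, q ^ (j * (2 * j + 1)) / qPoch q q (2 * j + 1) =
      ∏' k : ℕ, (1 + q ^ (k + 1))) := by
  obtain ⟨h1, h2⟩ := EulerHalvesAux.halves hq
  rw [EulerHalvesAux.T_eq_tprod hq] at h1 h2
  constructor
  · rw [← h1]
    exact tsum_congr fun j => by
      rw [EulerHalvesAux.term, EulerHalvesAux.choose_even, one_pow, mul_one]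
  · rw [← h2]
    exact tsum_congr fun j => by
      rw [EulerHalvesAux.term, EulerHalvesAux.choose_odd, one_pow, mul_one]
end
end
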